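/- arXiv:1411.0564 — 6 statements merged into one kernel-verified Lean document; each statement's English description precedes it below -/
import Mathlib

section
/- With the setup below, define B_G = (1/(r² n_d)) Σ_{d∈{0,…,r−1}²} Σ_{j=1}^{n_d} ( exp(i q_γ·b_{dj}) − E[exp(i q_γ·b_{dj})] ). If q_γ ≠ 0, then for every c > 0, P( |Re(B_G)| ≥ c‖q_γ‖₁ ε + ‖q_γ‖₁⁴ ε_r⁴ / 12 ) ≤ 2 exp( − c² n_d / (2 ‖q_γ‖₁² ε_r²) ). -/
open MeasureTheory ProbabilityTheory

/-- The ℓ¹ norm on ℝ². -/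
def srL1 (q : ℝ × ℝ) : ℝ := |q.1| + |q.2|

/-- The Euclidean (ℓ²) norm on ℝ². -/
noncomputable def srL2 (q : ℝ × ℝ) : ℝ := Real.sqrt (q.1 ^ 2 + q.2 ^ 2)

/-- `f(q, εr) = ‖q‖₁² εr²/2 + ‖q‖₁³ εr³/6`. -/
noncomputable def srF (q : ℝ × ℝ) (εr : ℝ) : ℝ :=
  srL1 q ^ 2 * εr ^ 2 / 2 + srL1 q ^ 3 * εr ^ 3 / 6

/-- The centered fluctuation term
`B_G = (1/(r² n_d)) Σ_d Σ_j (exp(i q·b_{dj}) − E[exp(i q·b_{dj})])`. -/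
noncomputable def srBG {Ω : Type*} [MeasureSpace Ω] (r nd : ℕ)
    (b : Fin r × Fin r → Fin nd → Ω → ℝ × ℝ) (q : ℝ × ℝ) (ω : Ω) : ℂ :=
  ((r : ℂ) ^ 2 * (nd : ℂ))⁻¹ * ∑ d : Fin r × Fin r, ∑ j : Fin nd,
    (Complex.exp (Complex.I * ((q.1 * (b d j ω).1 + q.2 * (b d j ω).2 : ℝ) : ℂ))
      - ∫ ω', Complex.exp (Complex.I * ((q.1 * (b d j ω').1 + q.2 * (b d j ω').2 : ℝ) : ℂ)))

/-- The coefficient `G_α(k') = (1/(r² n_d)) Σ_d Σ_j exp(−i θ_{αd}) exp(i q_α·b_{dj})`,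
parametrized by `δ = α − γ` (so that `θ_{αd} = (2π/r) δ·d`) and `q = q_α`. -/
noncomputable def srG {Ω : Type*} (r nd : ℕ)
    (b : Fin r × Fin r → Fin nd → Ω → ℝ × ℝ) (δ : ℤ × ℤ) (q : ℝ × ℝ) (ω : Ω) : ℂ :=
  ((r : ℂ) ^ 2 * (nd : ℂ))⁻¹ * ∑ d : Fin r × Fin r, ∑ j : Fin nd,
    Complex.exp (-Complex.I *
        ((2 * Real.pi / (r : ℝ) *
          ((δ.1 * ((d.1 : ℕ) : ℤ) + δ.2 * ((d.2 : ℕ) : ℤ) : ℤ) : ℝ) : ℝ) : ℂ))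
      * Complex.exp (Complex.I * ((q.1 * (b d j ω).1 + q.2 * (b d j ω).2 : ℝ) : ℂ))

lemma sr_integrable_of_bound {Ω : Type*} [MeasureSpace Ω] [IsProbabilityMeasure (ℙ : Measure Ω)]
    (f : Ω → ℝ) (C : ℝ) (hf : Measurable f) (hC : ∀ ω, |f ω| ≤ C) :
    Integrable f ℙ :=
  Integrable.mono' (integrable_const C) hf.aestronglyMeasurable
    (Filter.Eventually.of_forall fun ω => by rw [Real.norm_eq_abs]; exact hC ω)


lemma sr_mgf_le {Ω : Type*} [MeasureSpace Ω] [IsProbabilityMeasure (ℙ : Measure Ω)]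
    (X : Ω → ℝ) (M t : ℝ) (hM : 0 < M) (hmeas : Measurable X)
    (hbd : ∀ ω, |X ω| ≤ M) (hcent : (∫ ω, X ω) = 0) :
    mgf X ℙ t ≤ Real.exp (t ^ 2 * M ^ 2 / 2) := by
  have hXint : Integrable X ℙ := sr_integrable_of_bound X M hmeas hbd
  have hpt : ∀ ω, Real.exp (t * X ω) ≤ Real.cosh (t * M) + X ω * (Real.sinh (t * M) / M) := by
    intro ω
    set x := X ω with hx
    have hx1 : -M ≤ x := neg_le_of_abs_le (hbd ω)
    have hx2 : x ≤ M := le_of_abs_le (hbd ω)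
    have ha : (0:ℝ) ≤ (M - x) / (2 * M) := div_nonneg (by linarith) (by linarith)
    have hb : (0:ℝ) ≤ (M + x) / (2 * M) := div_nonneg (by linarith) (by linarith)
    have hab : (M - x) / (2 * M) + (M + x) / (2 * M) = 1 := by field_simp; ring
    have hconv := convexOn_exp.2 (Set.mem_univ (t * -M)) (Set.mem_univ (t * M)) ha hb hab
    simp only [smul_eq_mul] at hconv
    have h1 : (M - x) / (2 * M) * (t * -M) + (M + x) / (2 * M) * (t * M) = t * x := by
      field_simp; ring
    rw [h1] at hconv
    refine hconv.trans_eq ?_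
    rw [Real.cosh_eq, Real.sinh_eq]
    field_simp
    ring
  have hint1 : Integrable (fun ω => Real.exp (t * X ω)) ℙ := by
    refine sr_integrable_of_bound _ (Real.exp (|t| * M)) ((hmeas.const_mul t).exp) fun ω => ?_
    rw [abs_of_pos (Real.exp_pos _), Real.exp_le_exp]
    calc t * X ω ≤ |t * X ω| := le_abs_self _
      _ = |t| * |X ω| := abs_mul _ _
      _ ≤ |t| * M := by have := hbd ω; have := abs_nonneg t; nlinarith
  calc mgf X ℙ t = ∫ ω, Real.exp (t * X ω) := rfl
    _ ≤ ∫ ω, (Real.cosh (t * M) + X ω * (Real.sinh (t * M) / M)) :=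
        integral_mono hint1 ((integrable_const _).add (hXint.mul_const _)) hpt
    _ = Real.cosh (t * M) + (∫ ω, X ω) * (Real.sinh (t * M) / M) := by
        rw [integral_add (integrable_const _) (hXint.mul_const _), integral_const,
          integral_mul_const]
        simp
    _ = Real.cosh (t * M) := by rw [hcent]; ring
    _ ≤ Real.exp ((t * M) ^ 2 / 2) := Real.cosh_le_exp_half_sq _
    _ = Real.exp (t ^ 2 * M ^ 2 / 2) := by rw [mul_pow]

lemma sr_hoeffding {Ω : Type*} [MeasureSpace Ω] [IsProbabilityMeasure (ℙ : Measure Ω)]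
    {ι : Type*} [Fintype ι] [Nonempty ι] (X : ι → Ω → ℝ) (M : ℝ) (hM : 0 < M)
    (hmeas : ∀ i, Measurable (X i))
    (hindep : iIndepFun X ℙ)
    (hbd : ∀ i ω, |X i ω| ≤ M) (hcent : ∀ i, (∫ ω, X i ω) = 0)
    (T : ℝ) (hT : 0 < T) :
    (ℙ {ω | T ≤ |∑ i, X i ω|}).toReal
      ≤ 2 * Real.exp (-T ^ 2 / (2 * (Fintype.card ι) * M ^ 2)) := by
  have hn : 0 < ((Fintype.card ι : ℕ) : ℝ) := by
    exact_mod_cast Fintype.card_pos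
  set n : ℝ := ((Fintype.card ι : ℕ) : ℝ) with hndef
  set lam : ℝ := T / (n * M ^ 2) with hlam
  have hlam0 : 0 < lam := by positivity
  have hint : ∀ (s : ℝ) (i : ι), Integrable (fun ω => Real.exp (s * X i ω)) ℙ := by
    intro s i
    refine sr_integrable_of_bound _ (Real.exp (|s| * M)) ((hmeas i).const_mul s).exp fun ω => ?_
    rw [abs_of_pos (Real.exp_pos _), Real.exp_le_exp]
    calc s * X i ω ≤ |s * X i ω| := le_abs_self _
      _ = |s| * |X i ω| := abs_mul _ _
      _ ≤ |s| * M := by have := hbd i ω; have := abs_nonneg s; nlinarith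
  have hmgf : ∀ s : ℝ, mgf (∑ i, X i) ℙ s ≤ Real.exp (n * (s ^ 2 * M ^ 2 / 2)) := by
    intro s
    rw [hindep.mgf_sum hmeas Finset.univ]
    calc (∏ i, mgf (X i) ℙ s) ≤ ∏ _i : ι, Real.exp (s ^ 2 * M ^ 2 / 2) :=
        Finset.prod_le_prod (fun i _ => mgf_nonneg)
          (fun i _ => sr_mgf_le (X i) M s hM (hmeas i) (hbd i) (hcent i))
      _ = Real.exp (n * (s ^ 2 * M ^ 2 / 2)) := by
        rw [Finset.prod_const, Finset.card_univ, ← Real.exp_nat_mul, hndef]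
  have key : Real.exp (-lam * T) * Real.exp (n * (lam ^ 2 * M ^ 2 / 2))
      = Real.exp (-T ^ 2 / (2 * n * M ^ 2)) := by
    rw [← Real.exp_add]
    congr 1
    rw [hlam]
    field_simp
    ring
  have h1 : (ℙ {ω | T ≤ (∑ i, X i) ω}).toReal ≤ Real.exp (-T ^ 2 / (2 * n * M ^ 2)) := by
    calc (ℙ {ω | T ≤ (∑ i, X i) ω}).toReal
        ≤ Real.exp (-lam * T) * mgf (∑ i, X i) ℙ lam :=
          measure_ge_le_exp_mul_mgf T hlam0.le
            (hindep.integrable_exp_mul_sum hmeas (fun i _ => hint lam i))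
      _ ≤ Real.exp (-lam * T) * Real.exp (n * (lam ^ 2 * M ^ 2 / 2)) := by
          exact mul_le_mul_of_nonneg_left (hmgf lam) (Real.exp_pos _).le
      _ = _ := key
  have h2 : (ℙ {ω | (∑ i, X i) ω ≤ -T}).toReal ≤ Real.exp (-T ^ 2 / (2 * n * M ^ 2)) := by
    calc (ℙ {ω | (∑ i, X i) ω ≤ -T}).toReal
        ≤ Real.exp (-(-lam) * (-T)) * mgf (∑ i, X i) ℙ (-lam) :=
          measure_le_le_exp_mul_mgf (-T) (neg_nonpos.mpr hlam0.le)
            (hindep.integrable_exp_mul_sum hmeas (fun i _ => hint (-lam) i))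
      _ ≤ Real.exp (-(-lam) * (-T)) * Real.exp (n * ((-lam) ^ 2 * M ^ 2 / 2)) :=
          mul_le_mul_of_nonneg_left (hmgf (-lam)) (Real.exp_pos _).le
      _ = Real.exp (-lam * T) * Real.exp (n * (lam ^ 2 * M ^ 2 / 2)) := by
          rw [neg_sq]; ring_nf
      _ = _ := key
  have hsub : {ω | T ≤ |∑ i, X i ω|}
      ⊆ {ω | T ≤ (∑ i, X i) ω} ∪ {ω | (∑ i, X i) ω ≤ -T} := by
    intro ω hω
    simp only [Set.mem_setOf_eq, Set.mem_union, Finset.sum_apply] at *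
    rcases le_abs.mp hω with h | h
    · exact Or.inl h
    · exact Or.inr (by linarith)
  calc (ℙ {ω | T ≤ |∑ i, X i ω|}).toReal
      ≤ (ℙ {ω | T ≤ (∑ i, X i) ω} + ℙ {ω | (∑ i, X i) ω ≤ -T}).toReal := by
        refine ENNReal.toReal_mono ?_
          ((measure_mono hsub).trans (measure_union_le _ _))
        exact ENNReal.add_ne_top.mpr ⟨measure_ne_top _ _, measure_ne_top _ _⟩
    _ = (ℙ {ω | T ≤ (∑ i, X i) ω}).toReal + (ℙ {ω | (∑ i, X i) ω ≤ -T}).toReal :=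
        ENNReal.toReal_add (measure_ne_top _ _) (measure_ne_top _ _)
    _ ≤ Real.exp (-T ^ 2 / (2 * n * M ^ 2)) + Real.exp (-T ^ 2 / (2 * n * M ^ 2)) :=
        add_le_add h1 h2
    _ = 2 * Real.exp (-T ^ 2 / (2 * n * M ^ 2)) := by ring

set_option maxHeartbeats 1000000 in
/-- Concentration inequality (22) for the real part of `B_G`. -/
theorem stmt_4
    {Ω : Type*} [MeasureSpace Ω] [IsProbabilityMeasure (ℙ : Measure Ω)]
    (r N nd : ℕ) (hr : 2 ≤ r) (hN : 1 ≤ N) (hnd : 1 ≤ nd)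
    (ε εr : ℝ) (hε : 0 < ε) (hεr : εr = ε * r)
    (b : Fin r × Fin r → Fin nd → Ω → ℝ × ℝ)
    (hbmeas : ∀ d j, Measurable (b d j))
    (hbdd : ∀ d j ω, |(b d j ω).1| ≤ εr ∧ |(b d j ω).2| ≤ εr)
    (hindep : iIndepFun
      (fun p : (Fin r × Fin r) × Fin nd => b p.1 p.2) ℙ)
    (k' k γ : ℤ × ℤ)
    (hk'γ : k' = (k.1 + γ.1 * N, k.2 + γ.2 * N))
    (hk'HR : -(r * N : ℤ) ≤ 2 * k'.1 ∧ 2 * k'.1 < r * N ∧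
             -(r * N : ℤ) ≤ 2 * k'.2 ∧ 2 * k'.2 < r * N)
    (hkLR : -(N : ℤ) ≤ 2 * k.1 ∧ 2 * k.1 < N ∧ -(N : ℤ) ≤ 2 * k.2 ∧ 2 * k.2 < N)
    (qγ : ℝ × ℝ)
    (hqγ : qγ = (2 * Real.pi * (k'.1 : ℝ) / ((r : ℝ) * N),
                 2 * Real.pi * (k'.2 : ℝ) / ((r : ℝ) * N)))
    (hq0 : qγ ≠ 0) (c : ℝ) (hc : 0 < c) :
    (ℙ {ω | c * srL1 qγ * ε + srL1 qγ ^ 4 * εr ^ 4 / 12 ≤ |(srBG r nd b qγ ω).re|}).toReal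
      ≤ 2 * Real.exp (-(c ^ 2 * nd) / (2 * srL1 qγ ^ 2 * εr ^ 2)) := by
  have hr0 : 0 < (r : ℝ) := by positivity
  have hnd0 : 0 < (nd : ℝ) := by exact_mod_cast Nat.lt_of_lt_of_le Nat.zero_lt_one hnd
  have hεr0 : 0 < εr := by rw [hεr]; positivity
  set L : ℝ := srL1 qγ with hLdef
  have hL : 0 < L := by
    have h0 : 0 ≤ L := add_nonneg (abs_nonneg _) (abs_nonneg _)
    rcases h0.lt_or_eq with h | h
    · exact h
    · exfalso
      apply hq0
      have h1 : |qγ.1| = 0 ∧ |qγ.2| = 0 := by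
        constructor <;> nlinarith [abs_nonneg qγ.1, abs_nonneg qγ.2,
          (show |qγ.1| + |qγ.2| = L from rfl)]
      exact Prod.ext_iff.mpr ⟨abs_eq_zero.mp h1.1, abs_eq_zero.mp h1.2⟩
  set M : ℝ := (L * εr) ^ 2 / 2 with hMdef
  have hM : 0 < M := by positivity
  -- the index type
  haveI : Nonempty (Fin r) := ⟨⟨0, by omega⟩⟩
  haveI : Nonempty (Fin nd) := ⟨⟨0, by omega⟩⟩
  set ι := (Fin r × Fin r) × Fin nd
  -- the centered cosine variables
  set C : ι → ℝ := fun p =>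
    ∫ ω, Real.cos (qγ.1 * (b p.1 p.2 ω).1 + qγ.2 * (b p.1 p.2 ω).2) with hCdef
  set f : ι → ℝ × ℝ → ℝ := fun p v => Real.cos (qγ.1 * v.1 + qγ.2 * v.2) - C p with hfdef
  set X : ι → Ω → ℝ := fun p => f p ∘ b p.1 p.2 with hXdef
  have hfmeas : ∀ p : ι, Measurable (f p) := fun p =>
    (Real.measurable_cos.comp
      ((measurable_fst.const_mul qγ.1).add (measurable_snd.const_mul qγ.2))).sub
      measurable_const
  have hgmeas : ∀ p : ι,
      Measurable (fun ω => qγ.1 * (b p.1 p.2 ω).1 + qγ.2 * (b p.1 p.2 ω).2) := fun p =>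
    ((measurable_fst.comp (hbmeas p.1 p.2)).const_mul qγ.1).add
      ((measurable_snd.comp (hbmeas p.1 p.2)).const_mul qγ.2)
  have hXmeas : ∀ p : ι, Measurable (X p) := fun p => (hfmeas p).comp (hbmeas p.1 p.2)
  have hXindep : iIndepFun X ℙ := hindep.comp f hfmeas
  -- bounds
  have hgb : ∀ (p : ι) ω, |qγ.1 * (b p.1 p.2 ω).1 + qγ.2 * (b p.1 p.2 ω).2| ≤ L * εr := by
    intro p ω
    have h1 := (hbdd p.1 p.2 ω).1
    have h2 := (hbdd p.1 p.2 ω).2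
    have h3 := abs_add_le (qγ.1 * (b p.1 p.2 ω).1) (qγ.2 * (b p.1 p.2 ω).2)
    rw [abs_mul, abs_mul] at h3
    have hLr : |qγ.1| + |qγ.2| = L := rfl
    nlinarith [abs_nonneg qγ.1, abs_nonneg qγ.2, abs_nonneg (b p.1 p.2 ω).1,
      abs_nonneg (b p.1 p.2 ω).2]
  have hcosb : ∀ x : ℝ, |x| ≤ L * εr → 1 - M ≤ Real.cos x ∧ Real.cos x ≤ 1 := by
    intro x hx
    have h1 : 1 - x ^ 2 / 2 ≤ Real.cos x := Real.one_sub_sq_div_two_le_cos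
    have h2 : x ^ 2 ≤ (L * εr) ^ 2 := sq_le_sq' (neg_le_of_abs_le hx) (le_of_abs_le hx)
    exact ⟨by rw [hMdef]; linarith, Real.cos_le_one x⟩
  have hYint : ∀ p : ι,
      Integrable (fun ω => Real.cos (qγ.1 * (b p.1 p.2 ω).1 + qγ.2 * (b p.1 p.2 ω).2)) ℙ :=
    fun p => sr_integrable_of_bound _ 1 (Real.measurable_cos.comp (hgmeas p))
      (fun ω => Real.abs_cos_le_one _)
  have hCb : ∀ p : ι, 1 - M ≤ C p ∧ C p ≤ 1 := by
    intro p
    constructor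
    · have := integral_mono (integrable_const (1 - M)) (hYint p)
        (fun ω => (hcosb _ (hgb p ω)).1)
      simpa using this
    · have := integral_mono (hYint p) (integrable_const 1)
        (fun ω => (hcosb _ (hgb p ω)).2)
      simpa using this
  have hXbd : ∀ (p : ι) ω, |X p ω| ≤ M := by
    intro p ω
    have h1 := hcosb _ (hgb p ω)
    have h2 := hCb p
    rw [abs_le]
    constructor <;> simp only [hXdef, hfdef, Function.comp_apply] <;> [linarith [h1.1, h2.2];
      linarith [h1.2, h2.1]]
  have hXcent : ∀ p : ι, (∫ ω, X p ω) = 0 := by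
    intro p
    simp only [hXdef, hfdef, Function.comp_apply]
    rw [integral_sub (hYint p) (integrable_const _), integral_const]
    simp [hCdef]
  -- complex integrability
  have hexpint : ∀ p : ι, Integrable (fun ω' =>
      Complex.exp (Complex.I *
        ((qγ.1 * (b p.1 p.2 ω').1 + qγ.2 * (b p.1 p.2 ω').2 : ℝ) : ℂ))) ℙ := by
    intro p
    refine Integrable.mono' (integrable_const 1)
      (Complex.measurable_exp.comp
        (measurable_const.mul (Complex.measurable_ofReal.comp (hgmeas p)))).aestronglyMeasurable
      (Filter.Eventually.of_forall fun ω => ?_)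
    rw [Complex.norm_exp]
    simp
  -- real part identity
  have hre1 : ∀ x : ℝ, (Complex.exp (Complex.I * (x : ℂ))).re = Real.cos x := by
    intro x; rw [mul_comm]; exact Complex.exp_ofReal_mul_I_re x
  have hre2 : ∀ p : ι, (∫ ω', Complex.exp (Complex.I *
      ((qγ.1 * (b p.1 p.2 ω').1 + qγ.2 * (b p.1 p.2 ω').2 : ℝ) : ℂ))).re = C p := by
    intro p
    have h := integral_re (𝕜 := ℂ) (hexpint p)
    simp only [RCLike.re_to_complex] at h
    rw [← h]
    simp only [hre1, hCdef]
  have hcoef : ((r : ℂ) ^ 2 * (nd : ℂ))⁻¹ = ((((r : ℝ) ^ 2 * nd)⁻¹ : ℝ) : ℂ) := by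
    push_cast; ring
  have hre : ∀ ω, (srBG r nd b qγ ω).re = ((r : ℝ) ^ 2 * nd)⁻¹ * ∑ p : ι, X p ω := by
    intro ω
    have hsum : (∑ p : ι, X p ω) = ∑ d : Fin r × Fin r, ∑ j : Fin nd, X (d, j) ω :=
      Fintype.sum_prod_type _
    rw [srBG, hcoef, Complex.re_ofReal_mul, hsum]
    congr 1
    rw [Complex.re_sum]
    refine Finset.sum_congr rfl fun d _ => ?_
    rw [Complex.re_sum]
    refine Finset.sum_congr rfl fun j _ => ?_
    rw [Complex.sub_re, hre1, hre2 (d, j)]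
    rfl
  -- the threshold
  set a : ℝ := (r : ℝ) ^ 2 * nd with hadef
  have ha : 0 < a := by positivity
  set T : ℝ := a * (c * L * ε) with hTdef
  have hT : 0 < T := by positivity
  have hsubset : {ω | c * L * ε + L ^ 4 * εr ^ 4 / 12 ≤ |(srBG r nd b qγ ω).re|}
      ⊆ {ω | T ≤ |∑ p : ι, X p ω|} := by
    intro ω hω
    simp only [Set.mem_setOf_eq] at hω ⊢
    rw [hre ω, abs_mul, abs_of_pos (by positivity : (0:ℝ) < a⁻¹)] at hω
    have h1 : 0 ≤ L ^ 4 * εr ^ 4 / 12 := by positivity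
    have h2 : c * L * ε ≤ a⁻¹ * |∑ p : ι, X p ω| := by linarith
    calc T = a * (c * L * ε) := rfl
      _ ≤ a * (a⁻¹ * |∑ p : ι, X p ω|) := by
          exact mul_le_mul_of_nonneg_left h2 ha.le
      _ = |∑ p : ι, X p ω| := by field_simp
  have hcard : ((Fintype.card ι : ℕ) : ℝ) = a := by
    have h : Fintype.card ι = r * r * nd := by
      show Fintype.card ((Fin r × Fin r) × Fin nd) = r * r * nd
      simp
    rw [h, hadef]; push_cast; ring
  calc (ℙ {ω | c * L * ε + L ^ 4 * εr ^ 4 / 12 ≤ |(srBG r nd b qγ ω).re|}).toReal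
      ≤ (ℙ {ω | T ≤ |∑ p : ι, X p ω|}).toReal :=
        ENNReal.toReal_mono (measure_ne_top _ _) (measure_mono hsubset)
    _ ≤ 2 * Real.exp (-T ^ 2 / (2 * (Fintype.card ι) * M ^ 2)) :=
        sr_hoeffding X M hM hXmeas hXindep hXbd hXcent T hT
    _ ≤ 2 * Real.exp (-(c ^ 2 * nd) / (2 * L ^ 2 * εr ^ 2)) := by
        have hexps : -T ^ 2 / (2 * (Fintype.card ι) * M ^ 2)
            ≤ -(c ^ 2 * nd) / (2 * L ^ 2 * εr ^ 2) := by
          rw [hcard]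
          have heq : -T ^ 2 / (2 * a * M ^ 2) = -(2 * (c ^ 2 * nd)) / (L ^ 2 * εr ^ 2) := by
            rw [hTdef, hMdef, hadef, hεr]
            field_simp
          rw [heq, neg_div, neg_div]
          apply neg_le_neg
          rw [div_le_div_iff₀ (by positivity) (by positivity)]
          nlinarith [mul_nonneg (mul_nonneg (sq_nonneg c) hnd0.le)
            (mul_nonneg (sq_nonneg L) (sq_nonneg εr))]
        exact mul_le_mul_of_nonneg_left (Real.exp_le_exp.mpr hexps) (by norm_num)
end

section
/- With the setup below, assume in addition that the b_{dj} are identically distributed with common mean μ = E[b_{dj}] ∈ ℝ². Define G_γ(k') = (1/(r² n_d)) Σ_{d∈{0,…,r−1}²} Σ_{j=1}^{n_d} exp(i q_γ·b_{dj}). If ε ≤ 1/(πr) and q_γ ≠ 0, then for every c > 0, P( |G_γ(k') − 1| ≥ ‖q_γ‖₂‖μ‖₂ + ‖q_γ‖₁² ε_r² / 2 + √2 ( c‖q_γ‖₁ ε + ‖q_γ‖₁³ ε_r³ / 3 ) ) ≤ 4 exp( − c² n_d / 8 ). -/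
open MeasureTheory ProbabilityTheory

section AuxSR
open Real

lemma auxSR_cos_bound (x : ℝ) : |Real.cos x - 1| ≤ x ^ 2 / 2 := by
  rw [abs_le]
  constructor
  · nlinarith [Real.one_sub_sq_div_two_le_cos (x := x)]
  · nlinarith [Real.cos_le_one x, sq_nonneg x]

lemma auxSR_sin_sub (x : ℝ) (hx : 0 ≤ x) : x - x ^ 3 / 6 ≤ Real.sin x := by
  have hmono : MonotoneOn (fun t : ℝ => Real.sin t - t + t ^ 3 / 6) (Set.Ici 0) := by
    apply monotoneOn_of_deriv_nonneg (convex_Ici 0)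
    · fun_prop
    · fun_prop
    · intro y hy
      have hd : HasDerivAt (fun t : ℝ => Real.sin t - t + t ^ 3 / 6)
          (Real.cos y - 1 + 3 * y ^ 2 / 6) y := by
        have h1 : HasDerivAt (fun t : ℝ => Real.sin t) (Real.cos y) y := Real.hasDerivAt_sin y
        have h2 : HasDerivAt (fun t : ℝ => t) 1 y := hasDerivAt_id y
        have h3 : HasDerivAt (fun t : ℝ => t ^ 3 / 6) (3 * y ^ 2 / 6) y := by
          simpa using (hasDerivAt_pow 3 y).div_const 6
        exact (h1.sub h2).add h3
      rw [hd.deriv]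
      nlinarith [Real.one_sub_sq_div_two_le_cos (x := y)]
  have h0 := hmono (Set.self_mem_Ici) (Set.mem_Ici.2 hx) hx
  simp only [Real.sin_zero] at h0
  nlinarith

lemma auxSR_sin_lin (x : ℝ) : |Real.sin x - x| ≤ |x| ^ 3 / 6 := by
  rcases le_or_gt 0 x with hx | hx
  · rw [abs_of_nonneg hx, abs_le]
    constructor
    · nlinarith [auxSR_sin_sub x hx]
    · nlinarith [Real.sin_le hx, pow_nonneg hx 3]
  · have hx' : 0 ≤ -x := by linarith
    have h1 := auxSR_sin_sub (-x) hx'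
    have h2 := Real.sin_le hx'
    rw [Real.sin_neg] at h1 h2
    rw [abs_of_neg hx, abs_le]
    constructor <;> nlinarith

lemma auxSR_abs_sin (x : ℝ) : |Real.sin x| ≤ |x| := by
  rcases le_or_gt 0 x with hx | hx
  · rw [abs_of_nonneg hx, abs_le]
    refine ⟨?_, Real.sin_le hx⟩
    rcases le_or_gt x 1 with h1 | h1
    · have := Real.sin_nonneg_of_nonneg_of_le_pi hx (h1.trans (by linarith [Real.pi_gt_three]))
      linarith
    · linarith [Real.neg_one_le_sin x]
  · have hx' : 0 ≤ -x := by linarith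
    have h2 := Real.sin_le hx'
    rw [Real.sin_neg] at h2
    rw [abs_of_nonpos hx.le, abs_le]
    constructor
    · linarith
    · rcases le_or_gt (-x) 1 with h1 | h1
      · have := Real.sin_nonneg_of_nonneg_of_le_pi hx' (h1.trans (by linarith [Real.pi_gt_three]))
        rw [Real.sin_neg] at this; linarith
      · linarith [Real.sin_le_one x]

lemma auxSR_exp_convex {a x : ℝ} (t : ℝ) (ha : 0 < a) (hx : |x| ≤ a) :
    Real.exp (t * x) ≤ Real.cosh (t * a) + (x / a) * Real.sinh (t * a) := by
  obtain ⟨hx1, hx2⟩ := abs_le.1 hx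
  have h1 : (0:ℝ) ≤ (a - x) / (2 * a) := div_nonneg (by linarith) (by linarith)
  have h2 : (0:ℝ) ≤ (a + x) / (2 * a) := div_nonneg (by linarith) (by linarith)
  have hsum : (a - x) / (2 * a) + (a + x) / (2 * a) = 1 := by field_simp; ring
  have hcvx := convexOn_exp.2 (Set.mem_univ (-(t * a))) (Set.mem_univ (t * a)) h1 h2 hsum
  simp only [smul_eq_mul] at hcvx
  have hco : (a - x) / (2 * a) * (-(t * a)) + (a + x) / (2 * a) * (t * a) = t * x := by
    rw [div_mul_eq_mul_div, div_mul_eq_mul_div, ← add_div, div_eq_iff (by positivity : (2*a) ≠ 0)]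
    ring
  rw [hco] at hcvx
  have heq : (a - x) / (2 * a) * Real.exp (-(t * a)) + (a + x) / (2 * a) * Real.exp (t * a)
      = Real.cosh (t * a) + (x / a) * Real.sinh (t * a) := by
    rw [Real.cosh_eq, Real.sinh_eq]; field_simp; ring
  linarith [hcvx, heq.le, heq.ge]

lemma auxSR_int_exp {Ω : Type*} [MeasureSpace Ω] [IsProbabilityMeasure (ℙ : Measure Ω)]
    (X : Ω → ℝ) (hm : Measurable X) (t C : ℝ) (hbd : ∀ ω, |X ω| ≤ C) :
    Integrable (fun ω => Real.exp (t * X ω)) ℙ := by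
  refine (integrable_const (Real.exp (|t| * C))).mono'
    ((hm.const_mul t).exp.aestronglyMeasurable) (ae_of_all _ fun ω => ?_)
  rw [Real.norm_eq_abs, Real.abs_exp]
  refine Real.exp_le_exp.2 ((le_abs_self _).trans ?_)
  rw [abs_mul]
  exact mul_le_mul_of_nonneg_left (hbd ω) (abs_nonneg t)

lemma auxSR_int_bdd {Ω : Type*} [MeasureSpace Ω] [IsProbabilityMeasure (ℙ : Measure Ω)]
    (X : Ω → ℝ) (hm : Measurable X) (C : ℝ) (hbd : ∀ ω, |X ω| ≤ C) :
    Integrable X ℙ :=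
  (integrable_const C).mono' hm.aestronglyMeasurable
    (ae_of_all _ fun ω => by rw [Real.norm_eq_abs]; exact hbd ω)

lemma auxSR_mgf_le {Ω : Type*} [MeasureSpace Ω] [IsProbabilityMeasure (ℙ : Measure Ω)]
    (X : Ω → ℝ) (hm : Measurable X) {a : ℝ} (t : ℝ) (ha : 0 < a)
    (hbd : ∀ ω, |X ω| ≤ a) (hcen : ∫ ω, X ω = 0) :
    mgf X ℙ t ≤ Real.exp (t ^ 2 * a ^ 2 / 2) := by
  have hintX : Integrable X ℙ := auxSR_int_bdd X hm a hbd
  have hint1 : Integrable (fun ω => Real.exp (t * X ω)) ℙ := auxSR_int_exp X hm t a hbd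
  have hint2 : Integrable (fun ω =>
      Real.cosh (t * a) + (X ω / a) * Real.sinh (t * a)) ℙ :=
    (integrable_const _).add ((hintX.div_const a).mul_const _)
  have hstep : mgf X ℙ t ≤ Real.cosh (t * a) := by
    have h1 : mgf X ℙ t ≤ ∫ ω, (Real.cosh (t * a) + (X ω / a) * Real.sinh (t * a)) ∂ℙ := by
      refine integral_mono hint1 hint2 fun ω => ?_
      exact auxSR_exp_convex t ha (hbd ω)
    have h2 : ∫ ω, (Real.cosh (t * a) + (X ω / a) * Real.sinh (t * a)) ∂ℙ
        = Real.cosh (t * a) := by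
      rw [integral_add (integrable_const _) ((hintX.div_const a).mul_const _),
        integral_const, integral_mul_const, integral_div, hcen]
      simp
    linarith
  refine hstep.trans ?_
  have := Real.cosh_le_exp_half_sq (t * a)
  calc Real.cosh (t * a) ≤ Real.exp ((t * a) ^ 2 / 2) := this
    _ = Real.exp (t ^ 2 * a ^ 2 / 2) := by rw [mul_pow]

lemma auxSR_hoeffding_one {Ω : Type*} [MeasureSpace Ω] [IsProbabilityMeasure (ℙ : Measure Ω)]
    {ι : Type*} [Fintype ι] (X : ι → Ω → ℝ)
    (hm : ∀ i, Measurable (X i))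
    (hindep : iIndepFun X ℙ)
    {a : ℝ} (ha : 0 < a) (hbd : ∀ i ω, |X i ω| ≤ a) (hcen : ∀ i, ∫ ω, X i ω = 0)
    {s : ℝ} (hs : 0 < s) :
    (ℙ {ω | s ≤ ∑ i, X i ω}).toReal
      ≤ Real.exp (-s ^ 2 / (2 * (Fintype.card ι : ℝ) * a ^ 2)) := by
  rcases Nat.eq_zero_or_pos (Fintype.card ι) with hcard | hcard
  · have : IsEmpty ι := Fintype.card_eq_zero_iff.mp hcard
    have hset : {ω : Ω | s ≤ ∑ i, X i ω} = ∅ := by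
      ext ω; simp only [Set.mem_setOf_eq, Set.mem_empty_iff_false, iff_false, not_le]
      rw [Finset.sum_of_isEmpty]; exact hs
    rw [hset]
    simp [Real.exp_nonneg]
  set m : ℝ := (Fintype.card ι : ℝ) with hmdef
  have hm0 : 0 < m := by rw [hmdef]; exact_mod_cast hcard
  set t : ℝ := s / (m * a ^ 2) with htdef
  have ht : 0 < t := div_pos hs (by positivity)
  have hSmeas : Measurable (fun ω => ∑ i, X i ω) := by fun_prop
  have hSbd : ∀ ω, |∑ i, X i ω| ≤ m * a := fun ω => by
    calc |∑ i, X i ω| ≤ ∑ i, |X i ω| := Finset.abs_sum_le_sum_abs _ _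
      _ ≤ ∑ _i : ι, a := Finset.sum_le_sum fun i _ => hbd i ω
      _ = m * a := by rw [Finset.sum_const]; simp [hmdef, mul_comm]
  have hintS : Integrable (fun ω => Real.exp (t * ∑ i, X i ω)) ℙ :=
    auxSR_int_exp _ hSmeas t (m * a) hSbd
  have hfun : (fun ω => ∑ i, X i ω) = ∑ i, X i := by
    funext ω; rw [Finset.sum_apply]
  have hcher := measure_ge_le_exp_mul_mgf (X := fun ω => ∑ i, X i ω) (μ := ℙ) s ht.le hintS
  refine hcher.trans ?_
  have hmgfsum : mgf (fun ω => ∑ i, X i ω) ℙ t = ∏ i, mgf (X i) ℙ t := by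
    rw [hfun]; exact hindep.mgf_sum hm Finset.univ
  have hprod : ∏ i, mgf (X i) ℙ t ≤ Real.exp (m * (t ^ 2 * a ^ 2 / 2)) := by
    calc ∏ i, mgf (X i) ℙ t ≤ ∏ _i : ι, Real.exp (t ^ 2 * a ^ 2 / 2) := by
          refine Finset.prod_le_prod (fun i _ => mgf_nonneg) fun i _ =>
            auxSR_mgf_le (X i) (hm i) t ha (hbd i) (hcen i)
      _ = Real.exp (m * (t ^ 2 * a ^ 2 / 2)) := by
          rw [Finset.prod_const, ← Real.exp_nat_mul]; simp [hmdef]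
  calc Real.exp (-t * s) * mgf (fun ω => ∑ i, X i ω) ℙ t
      ≤ Real.exp (-t * s) * Real.exp (m * (t ^ 2 * a ^ 2 / 2)) := by
        rw [hmgfsum]
        exact mul_le_mul_of_nonneg_left hprod (Real.exp_nonneg _)
    _ = Real.exp (-t * s + m * (t ^ 2 * a ^ 2 / 2)) := by rw [← Real.exp_add]
    _ = Real.exp (-s ^ 2 / (2 * m * a ^ 2)) := by
        congr 1
        rw [htdef]
        field_simp
        ring

lemma auxSR_hoeffding_abs {Ω : Type*} [MeasureSpace Ω] [IsProbabilityMeasure (ℙ : Measure Ω)]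
    {ι : Type*} [Fintype ι] (X : ι → Ω → ℝ)
    (hm : ∀ i, Measurable (X i))
    (hindep : iIndepFun X ℙ)
    {a : ℝ} (ha : 0 < a) (hbd : ∀ i ω, |X i ω| ≤ a) (hcen : ∀ i, ∫ ω, X i ω = 0)
    {s : ℝ} (hs : 0 < s) :
    (ℙ {ω | s ≤ |∑ i, X i ω|}).toReal
      ≤ 2 * Real.exp (-s ^ 2 / (2 * (Fintype.card ι : ℝ) * a ^ 2)) := by
  have hneg : iIndepFun (fun i => (fun x : ℝ => -x) ∘ X i) ℙ :=
    hindep.comp _ (fun i => measurable_neg)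
  have h1 := auxSR_hoeffding_one X hm hindep ha hbd hcen hs
  have h2 := auxSR_hoeffding_one (fun i => (fun x : ℝ => -x) ∘ X i)
    (fun i => (hm i).neg) hneg ha
    (fun i ω => by simp only [Function.comp_apply, abs_neg]; exact hbd i ω)
    (fun i => by simp only [Function.comp_apply]; rw [integral_neg, hcen i, neg_zero]) hs
  have hsub : {ω : Ω | s ≤ |∑ i, X i ω|}
      ⊆ {ω : Ω | s ≤ ∑ i, X i ω} ∪ {ω : Ω | s ≤ ∑ i, ((fun x : ℝ => -x) ∘ X i) ω} := by
    intro ω hω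
    simp only [Set.mem_setOf_eq] at hω
    rcases abs_cases (∑ i, X i ω) with ⟨heq, _⟩ | ⟨heq, _⟩
    · left; rw [heq] at hω; exact hω
    · right
      simp only [Set.mem_setOf_eq, Function.comp_apply]
      rw [heq] at hω
      calc s ≤ -∑ i, X i ω := hω
        _ = ∑ i, -X i ω := by rw [← Finset.sum_neg_distrib]
  calc (ℙ {ω | s ≤ |∑ i, X i ω|}).toReal
      ≤ ((ℙ {ω : Ω | s ≤ ∑ i, X i ω}) + ℙ {ω : Ω | s ≤ ∑ i, ((fun x : ℝ => -x) ∘ X i) ω}).toReal := by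
        refine ENNReal.toReal_mono (by finiteness) ?_
        exact (measure_mono hsub).trans (measure_union_le _ _)
    _ = (ℙ {ω : Ω | s ≤ ∑ i, X i ω}).toReal
        + (ℙ {ω : Ω | s ≤ ∑ i, ((fun x : ℝ => -x) ∘ X i) ω}).toReal := by
        rw [ENNReal.toReal_add (measure_ne_top _ _) (measure_ne_top _ _)]
    _ ≤ _ := by rw [two_mul]; exact add_le_add h1 h2

lemma auxSR_cs (q m : ℝ × ℝ) : |q.1 * m.1 + q.2 * m.2| ≤ srL2 q * srL2 m := by
  have hA : srL2 q ^ 2 = q.1 ^ 2 + q.2 ^ 2 := Real.sq_sqrt (by positivity)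
  have hB : srL2 m ^ 2 = m.1 ^ 2 + m.2 ^ 2 := Real.sq_sqrt (by positivity)
  have hAn : 0 ≤ srL2 q := Real.sqrt_nonneg _
  have hBn : 0 ≤ srL2 m := Real.sqrt_nonneg _
  have h : (q.1 * m.1 + q.2 * m.2) ^ 2 ≤ (srL2 q * srL2 m) ^ 2 := by
    rw [mul_pow, hA, hB]; nlinarith [sq_nonneg (q.1 * m.2 - q.2 * m.1)]
  rw [← Real.sqrt_sq_eq_abs]
  exact (Real.sqrt_le_sqrt h).trans_eq (Real.sqrt_sq (by positivity))

lemma auxSR_exp_I_re (x : ℝ) : (Complex.exp (Complex.I * (x : ℂ))).re = Real.cos x := by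
  rw [mul_comm]; exact Complex.exp_ofReal_mul_I_re x

lemma auxSR_exp_I_im (x : ℝ) : (Complex.exp (Complex.I * (x : ℂ))).im = Real.sin x := by
  rw [mul_comm]; exact Complex.exp_ofReal_mul_I_im x

lemma auxSR_expI (x : ℝ) :
    Complex.exp (Complex.I * (x : ℂ)) = (Real.cos x : ℂ) + (Real.sin x : ℂ) * Complex.I := by
  rw [mul_comm, Complex.exp_mul_I, Complex.ofReal_cos, Complex.ofReal_sin]

lemma auxSR_sqrt2 : (1:ℝ) ≤ Real.sqrt 2 := by
  nlinarith [Real.sq_sqrt (by norm_num : (2:ℝ) ≥ 0).le, Real.sqrt_nonneg 2]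

-- splitting a complex modulus bound into re/im
lemma auxSR_re_im {z : ℂ} {τ : ℝ} (hτ : 0 < τ) (h : Real.sqrt 2 * τ ≤ ‖z‖) :
    τ ≤ |z.re| ∨ τ ≤ |z.im| := by
  by_contra hcon
  push_neg at hcon
  obtain ⟨h1, h2⟩ := hcon
  have habs : ‖z‖ = Real.sqrt (z.re ^ 2 + z.im ^ 2) := by
    rw [Complex.norm_def, Complex.normSq_apply]; ring_nf
  have hlt : z.re ^ 2 + z.im ^ 2 < 2 * τ ^ 2 := by
    have e1 : z.re ^ 2 < τ ^ 2 := by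
      have := abs_nonneg z.re; nlinarith [sq_abs z.re]
    have e2 : z.im ^ 2 < τ ^ 2 := by
      have := abs_nonneg z.im; nlinarith [sq_abs z.im]
    linarith
  have : ‖z‖ < Real.sqrt 2 * τ := by
    rw [habs, ← Real.sqrt_sq hτ.le, ← Real.sqrt_mul (by norm_num)]
    exact Real.sqrt_lt_sqrt (by positivity) (by nlinarith [Real.sqrt_sq hτ.le])
  linarith

end AuxSR

set_option maxHeartbeats 2000000 in
/-- Concentration inequality (29) for the main approximation coefficient `G_γ(k′)`. -/
theorem stmt_7
    {Ω : Type*} [MeasureSpace Ω] [IsProbabilityMeasure (ℙ : Measure Ω)]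
    (r N nd : ℕ) (hr : 2 ≤ r) (hN : 1 ≤ N) (hnd : 1 ≤ nd)
    (ε εr : ℝ) (hε : 0 < ε) (hεr : εr = ε * r)
    (b : Fin r × Fin r → Fin nd → Ω → ℝ × ℝ)
    (hbmeas : ∀ d j, Measurable (b d j))
    (hbdd : ∀ d j ω, |(b d j ω).1| ≤ εr ∧ |(b d j ω).2| ≤ εr)
    (hindep : iIndepFun
      (fun p : (Fin r × Fin r) × Fin nd => b p.1 p.2) ℙ)
    (k' k γ : ℤ × ℤ)
    (hk'γ : k' = (k.1 + γ.1 * N, k.2 + γ.2 * N))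
    (hk'HR : -(r * N : ℤ) ≤ 2 * k'.1 ∧ 2 * k'.1 < r * N ∧
             -(r * N : ℤ) ≤ 2 * k'.2 ∧ 2 * k'.2 < r * N)
    (hkLR : -(N : ℤ) ≤ 2 * k.1 ∧ 2 * k.1 < N ∧ -(N : ℤ) ≤ 2 * k.2 ∧ 2 * k.2 < N)
    (qγ : ℝ × ℝ)
    (hqγ : qγ = (2 * Real.pi * (k'.1 : ℝ) / ((r : ℝ) * N),
                 2 * Real.pi * (k'.2 : ℝ) / ((r : ℝ) * N)))
    (hiid : ∀ d j d' j', IdentDistrib (b d j) (b d' j') ℙ ℙ)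
    (μv : ℝ × ℝ) (hμ : ∀ d j, μv = (∫ ω, (b d j ω).1, ∫ ω, (b d j ω).2))
    (hεπ : ε ≤ 1 / (Real.pi * r)) (hq0 : qγ ≠ 0) (c : ℝ) (hc : 0 < c) :
    (ℙ {ω | srL2 qγ * srL2 μv + srL1 qγ ^ 2 * εr ^ 2 / 2
          + Real.sqrt 2 * (c * srL1 qγ * ε + srL1 qγ ^ 3 * εr ^ 3 / 3)
        ≤ ‖srG r nd b 0 qγ ω - 1‖}).toReal
      ≤ 4 * Real.exp (-(c ^ 2 * nd) / 8) := by
  classical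
  have hπ : (0:ℝ) < Real.pi := Real.pi_pos
  have hrpos : (0:ℝ) < r := by exact_mod_cast (by omega : 0 < r)
  have hndpos : (0:ℝ) < nd := by exact_mod_cast (by omega : 0 < nd)
  have hNpos : (0:ℝ) < N := by exact_mod_cast (by omega : 0 < N)
  have hεrpos : 0 < εr := by rw [hεr]; positivity
  have hεrle : εr ≤ 1 / Real.pi := by
    rw [hεr]
    calc ε * r ≤ 1 / (Real.pi * r) * r := mul_le_mul_of_nonneg_right hεπ hrpos.le
      _ = 1 / Real.pi := by field_simp
  -- bounds on the components of qγ
  have hq1 : |qγ.1| ≤ Real.pi := by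
    have hreal : |2 * (k'.1:ℝ)| ≤ (r:ℝ) * N := by
      have : |(2 * k'.1 : ℤ)| ≤ (r * N : ℤ) := abs_le.2 ⟨hk'HR.1, hk'HR.2.1.le⟩
      exact_mod_cast this
    rw [hqγ]
    show |2 * Real.pi * (k'.1 : ℝ) / ((r : ℝ) * N)| ≤ Real.pi
    rw [show 2 * Real.pi * (k'.1:ℝ) / ((r:ℝ)*N) = Real.pi * (2*(k'.1:ℝ)) / ((r:ℝ)*N) by ring,
      abs_div, abs_mul, abs_of_pos hπ, abs_of_pos (by positivity : (0:ℝ) < (r:ℝ)*N),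
      div_le_iff₀ (by positivity)]
    exact mul_le_mul_of_nonneg_left hreal hπ.le
  have hq2 : |qγ.2| ≤ Real.pi := by
    have hreal : |2 * (k'.2:ℝ)| ≤ (r:ℝ) * N := by
      have : |(2 * k'.2 : ℤ)| ≤ (r * N : ℤ) := abs_le.2 ⟨hk'HR.2.2.1, hk'HR.2.2.2.le⟩
      exact_mod_cast this
    rw [hqγ]
    show |2 * Real.pi * (k'.2 : ℝ) / ((r : ℝ) * N)| ≤ Real.pi
    rw [show 2 * Real.pi * (k'.2:ℝ) / ((r:ℝ)*N) = Real.pi * (2*(k'.2:ℝ)) / ((r:ℝ)*N) by ring,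
      abs_div, abs_mul, abs_of_pos hπ, abs_of_pos (by positivity : (0:ℝ) < (r:ℝ)*N),
      div_le_iff₀ (by positivity)]
    exact mul_le_mul_of_nonneg_left hreal hπ.le
  have hLdef : srL1 qγ = |qγ.1| + |qγ.2| := rfl
  have hLnn : 0 ≤ srL1 qγ := by rw [hLdef]; positivity
  have hLpos : 0 < srL1 qγ := by
    rcases hLnn.lt_or_eq with h | h
    · exact h
    · exfalso
      apply hq0
      have h1 : |qγ.1| = 0 := by
        have := abs_nonneg qγ.1; have := abs_nonneg qγ.2; rw [hLdef] at h; linarith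
      have h2 : |qγ.2| = 0 := by
        have := abs_nonneg qγ.1; have := abs_nonneg qγ.2; rw [hLdef] at h; linarith
      have : qγ = (qγ.1, qγ.2) := rfl
      rw [this, abs_eq_zero.1 h1, abs_eq_zero.1 h2]
      rfl
  have hL2π : srL1 qγ ≤ 2 * Real.pi := by rw [hLdef]; linarith
  have hx₀pos : 0 < srL1 qγ * εr := mul_pos hLpos hεrpos
  have hx₀le2 : srL1 qγ * εr ≤ 2 := by
    calc srL1 qγ * εr ≤ (2 * Real.pi) * (1 / Real.pi) :=
          mul_le_mul hL2π hεrle hεrpos.le (by positivity)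
      _ = 2 := by field_simp
  set x₀ : ℝ := srL1 qγ * εr with hx₀def
  -- the random variables
  set Z : (Fin r × Fin r) × Fin nd → Ω → ℝ :=
    fun p ω => qγ.1 * (b p.1 p.2 ω).1 + qγ.2 * (b p.1 p.2 ω).2 with hZ
  have hZmeas : ∀ p, Measurable (Z p) := fun p =>
    ((measurable_fst.comp (hbmeas p.1 p.2)).const_mul _).add
      ((measurable_snd.comp (hbmeas p.1 p.2)).const_mul _)
  have hZbd : ∀ p ω, |Z p ω| ≤ x₀ := by
    intro p ω
    calc |Z p ω| ≤ |qγ.1 * (b p.1 p.2 ω).1| + |qγ.2 * (b p.1 p.2 ω).2| := abs_add_le _ _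
      _ = |qγ.1| * |(b p.1 p.2 ω).1| + |qγ.2| * |(b p.1 p.2 ω).2| := by rw [abs_mul, abs_mul]
      _ ≤ |qγ.1| * εr + |qγ.2| * εr :=
          add_le_add (mul_le_mul_of_nonneg_left (hbdd p.1 p.2 ω).1 (abs_nonneg _))
            (mul_le_mul_of_nonneg_left (hbdd p.1 p.2 ω).2 (abs_nonneg _))
      _ = x₀ := by rw [hx₀def, hLdef]; ring
  set p₀ : (Fin r × Fin r) × Fin nd :=
    ⟨⟨⟨0, by omega⟩, ⟨0, by omega⟩⟩, ⟨0, by omega⟩⟩ with hp₀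
  set Ec : ℝ := ∫ ω, Real.cos (Z p₀ ω) with hEc
  set Es : ℝ := ∫ ω, Real.sin (Z p₀ ω) with hEs
  have hgcm : Measurable (fun v : ℝ × ℝ => Real.cos (qγ.1 * v.1 + qγ.2 * v.2)) := by fun_prop
  have hgsm : Measurable (fun v : ℝ × ℝ => Real.sin (qγ.1 * v.1 + qγ.2 * v.2)) := by fun_prop
  have hcos_eq : ∀ p, ∫ ω, Real.cos (Z p ω) = Ec := by
    intro p
    rw [hEc]
    exact ((hiid p.1 p.2 p₀.1 p₀.2).comp hgcm).integral_eq
  have hsin_eq : ∀ p, ∫ ω, Real.sin (Z p ω) = Es := by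
    intro p
    rw [hEs]
    exact ((hiid p.1 p.2 p₀.1 p₀.2).comp hgsm).integral_eq
  have hgCm : Measurable
      (fun v : ℝ × ℝ => Complex.exp (Complex.I * ((qγ.1 * v.1 + qγ.2 * v.2 : ℝ) : ℂ))) := by
    fun_prop
  set EC : ℂ := ∫ ω, Complex.exp (Complex.I * ((Z p₀ ω : ℝ) : ℂ)) with hEC
  -- integrability facts
  have hint_cos : ∀ p, Integrable (fun ω => Real.cos (Z p ω)) ℙ := fun p =>
    auxSR_int_bdd _ (Real.measurable_cos.comp (hZmeas p)) 1 (fun ω => Real.abs_cos_le_one _)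
  have hint_sin : ∀ p, Integrable (fun ω => Real.sin (Z p ω)) ℙ := fun p =>
    auxSR_int_bdd _ (Real.measurable_sin.comp (hZmeas p)) 1 (fun ω => Real.abs_sin_le_one _)
  have hint_Z : Integrable (Z p₀) ℙ := auxSR_int_bdd _ (hZmeas p₀) x₀ (hZbd p₀)
  -- decomposition of EC
  have hECsplit : EC = (Ec : ℂ) + (Es : ℂ) * Complex.I := by
    rw [hEC, hEc, hEs]
    calc ∫ ω, Complex.exp (Complex.I * ((Z p₀ ω : ℝ) : ℂ))
        = ∫ ω, ((Real.cos (Z p₀ ω) : ℂ) + (Real.sin (Z p₀ ω) : ℂ) * Complex.I) := by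
          congr 1; funext ω; exact auxSR_expI _
      _ = (∫ ω, (Real.cos (Z p₀ ω) : ℂ)) + ∫ ω, (Real.sin (Z p₀ ω) : ℂ) * Complex.I :=
          integral_add (hint_cos p₀).ofReal ((hint_sin p₀).ofReal.mul_const _)
      _ = ((∫ ω, Real.cos (Z p₀ ω) : ℝ) : ℂ) + ((∫ ω, Real.sin (Z p₀ ω) : ℝ) : ℂ) * Complex.I := by
          rw [integral_mul_const]
          congr 1
          · exact integral_ofReal
          · congr 1
            exact integral_ofReal
  have hECre : EC.re = Ec := by rw [hECsplit]; simp
  have hECim : EC.im = Es := by rw [hECsplit]; simp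
  -- bound on |Ec - 1|
  have hcos_pt : ∀ p ω, |Real.cos (Z p ω) - 1| ≤ x₀ ^ 2 / 2 := by
    intro p ω
    refine (auxSR_cos_bound _).trans ?_
    have h1 := hZbd p ω
    have h2 := abs_nonneg (Z p ω)
    have h3 : |Z p ω| * |Z p ω| ≤ x₀ * x₀ := mul_le_mul h1 h1 h2 (by positivity)
    calc Z p ω ^ 2 / 2 = |Z p ω| * |Z p ω| / 2 := by rw [← sq_abs]; ring
      _ ≤ x₀ * x₀ / 2 := by linarith
      _ = x₀ ^ 2 / 2 := by ring
  have hEc_bd : |Ec - 1| ≤ x₀ ^ 2 / 2 := by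
    have heq : Ec - 1 = ∫ ω, (Real.cos (Z p₀ ω) - 1) := by
      rw [hEc, integral_sub (hint_cos p₀) (integrable_const 1), integral_const]
      simp
    rw [heq]
    calc |∫ ω, (Real.cos (Z p₀ ω) - 1)| ≤ ∫ ω, |Real.cos (Z p₀ ω) - 1| := by
          simpa [Real.norm_eq_abs] using
            norm_integral_le_integral_norm (fun ω => Real.cos (Z p₀ ω) - 1) (μ := ℙ)
      _ ≤ ∫ _ω, (x₀ ^ 2 / 2 : ℝ) := by
          refine integral_mono ?_ (integrable_const _) (fun ω => hcos_pt p₀ ω)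
          exact auxSR_int_bdd _ ((Real.measurable_cos.comp (hZmeas p₀)).sub measurable_const).abs
            2 (fun ω => by
              rw [abs_abs]
              calc |Real.cos (Z p₀ ω) - 1| ≤ |Real.cos (Z p₀ ω)| + |(1:ℝ)| := abs_sub _ _
                _ ≤ 2 := by have := Real.abs_cos_le_one (Z p₀ ω); simp at *; linarith)
      _ = x₀ ^ 2 / 2 := by simp
  have hEc_le : Ec ≤ 1 := by
    rw [hEc]
    calc ∫ ω, Real.cos (Z p₀ ω) ≤ ∫ _ω, (1:ℝ) :=
          integral_mono (hint_cos p₀) (integrable_const 1) (fun ω => Real.cos_le_one _)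
      _ = 1 := by simp
  -- mean of Z
  have hb1int : Integrable (fun ω => (b p₀.1 p₀.2 ω).1) ℙ :=
    auxSR_int_bdd _ (measurable_fst.comp (hbmeas _ _)) εr (fun ω => (hbdd _ _ ω).1)
  have hb2int : Integrable (fun ω => (b p₀.1 p₀.2 ω).2) ℙ :=
    auxSR_int_bdd _ (measurable_snd.comp (hbmeas _ _)) εr (fun ω => (hbdd _ _ ω).2)
  have hμ1 : μv.1 = ∫ ω, (b p₀.1 p₀.2 ω).1 := by rw [hμ p₀.1 p₀.2]
  have hμ2 : μv.2 = ∫ ω, (b p₀.1 p₀.2 ω).2 := by rw [hμ p₀.1 p₀.2]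
  have hZint_val : ∫ ω, Z p₀ ω = qγ.1 * μv.1 + qγ.2 * μv.2 := by
    rw [hZ]
    simp only
    rw [integral_add (hb1int.const_mul _) (hb2int.const_mul _), integral_const_mul,
      integral_const_mul, hμ1, hμ2]
  -- bound on |Es - q·μ|
  have hEs_bd : |Es - (qγ.1 * μv.1 + qγ.2 * μv.2)| ≤ x₀ ^ 3 / 6 := by
    have heq : Es - (qγ.1 * μv.1 + qγ.2 * μv.2) = ∫ ω, (Real.sin (Z p₀ ω) - Z p₀ ω) := by
      rw [hEs, integral_sub (hint_sin p₀) hint_Z, hZint_val]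
    rw [heq]
    calc |∫ ω, (Real.sin (Z p₀ ω) - Z p₀ ω)| ≤ ∫ ω, |Real.sin (Z p₀ ω) - Z p₀ ω| := by
          simpa [Real.norm_eq_abs] using
            norm_integral_le_integral_norm (fun ω => Real.sin (Z p₀ ω) - Z p₀ ω) (μ := ℙ)
      _ ≤ ∫ _ω, (x₀ ^ 3 / 6 : ℝ) := by
          refine integral_mono ?_ (integrable_const _) (fun ω => ?_)
          · exact auxSR_int_bdd _
              ((Real.measurable_sin.comp (hZmeas p₀)).sub (hZmeas p₀)).abs (2 * x₀)
              (fun ω => by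
                rw [abs_abs]
                calc |Real.sin (Z p₀ ω) - Z p₀ ω| ≤ |Real.sin (Z p₀ ω)| + |Z p₀ ω| := abs_sub _ _
                  _ ≤ |Z p₀ ω| + |Z p₀ ω| := by
                      have := auxSR_abs_sin (Z p₀ ω); linarith
                  _ ≤ 2 * x₀ := by have := hZbd p₀ ω; linarith)
          · refine (auxSR_sin_lin _).trans ?_
            have h1 : |Z p₀ ω| ^ 3 ≤ x₀ ^ 3 :=
              pow_le_pow_left₀ (abs_nonneg _) (hZbd p₀ ω) 3
            linarith
      _ = x₀ ^ 3 / 6 := by simp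
  -- bound on the deterministic part
  have hA : ‖EC - 1‖ ≤ srL2 qγ * srL2 μv + x₀ ^ 2 / 2 + x₀ ^ 3 / 6 := by
    have heq : EC - 1 = ((Ec - 1 : ℝ) : ℂ)
        + ((Es - (qγ.1 * μv.1 + qγ.2 * μv.2) : ℝ) : ℂ) * Complex.I
        + (((qγ.1 * μv.1 + qγ.2 * μv.2 : ℝ)) : ℂ) * Complex.I := by
      rw [hECsplit]; push_cast; ring
    rw [heq]
    have ht1 := norm_add_le (((Ec - 1 : ℝ) : ℂ)
        + ((Es - (qγ.1 * μv.1 + qγ.2 * μv.2) : ℝ) : ℂ) * Complex.I)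
      ((((qγ.1 * μv.1 + qγ.2 * μv.2 : ℝ)) : ℂ) * Complex.I)
    have ht2 := norm_add_le (((Ec - 1 : ℝ) : ℂ))
      (((Es - (qγ.1 * μv.1 + qγ.2 * μv.2) : ℝ) : ℂ) * Complex.I)
    have he1 : ‖((Ec - 1 : ℝ) : ℂ)‖ = |Ec - 1| := by rw [Complex.norm_real, Real.norm_eq_abs]
    have he2 : ‖((Es - (qγ.1 * μv.1 + qγ.2 * μv.2) : ℝ) : ℂ) * Complex.I‖
        = |Es - (qγ.1 * μv.1 + qγ.2 * μv.2)| := by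
      rw [norm_mul, Complex.norm_I, Complex.norm_real, Real.norm_eq_abs, mul_one]
    have he3 : ‖(((qγ.1 * μv.1 + qγ.2 * μv.2 : ℝ)) : ℂ) * Complex.I‖
        = |qγ.1 * μv.1 + qγ.2 * μv.2| := by
      rw [norm_mul, Complex.norm_I, Complex.norm_real, Real.norm_eq_abs, mul_one]
    have hcs := auxSR_cs qγ μv
    rw [he1, he2] at ht2
    rw [he3] at ht1
    linarith [hEc_bd, hEs_bd]
  -- the centered variables
  set Xc : (Fin r × Fin r) × Fin nd → Ω → ℝ := fun p ω => Real.cos (Z p ω) - Ec with hXc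
  set Xs : (Fin r × Fin r) × Fin nd → Ω → ℝ := fun p ω => Real.sin (Z p ω) - Es with hXs
  have hXcm : ∀ p, Measurable (Xc p) := fun p =>
    (Real.measurable_cos.comp (hZmeas p)).sub measurable_const
  have hXsm : ∀ p, Measurable (Xs p) := fun p =>
    (Real.measurable_sin.comp (hZmeas p)).sub measurable_const
  have hXcind : iIndepFun Xc ℙ := by
    have := hindep.comp
      (fun _ => fun v : ℝ × ℝ => Real.cos (qγ.1 * v.1 + qγ.2 * v.2) - Ec)
      (fun _ => by fun_prop)
    exact this
  have hXsind : iIndepFun Xs ℙ := by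
    have := hindep.comp
      (fun _ => fun v : ℝ × ℝ => Real.sin (qγ.1 * v.1 + qγ.2 * v.2) - Es)
      (fun _ => by fun_prop)
    exact this
  have hXc_bd : ∀ p ω, |Xc p ω| ≤ x₀ ^ 2 / 2 := by
    intro p ω
    have h1 := abs_le.1 (hcos_pt p ω)
    have h2 := abs_le.1 hEc_bd
    have h3 := Real.cos_le_one (Z p ω)
    rw [hXc]
    simp only
    rw [abs_le]
    constructor <;> linarith
  have hXs_bd : ∀ p ω, |Xs p ω| ≤ 2 * x₀ := by
    intro p ω
    have hEs_abs : |Es| ≤ x₀ := by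
      rw [hEs]
      calc |∫ ω, Real.sin (Z p₀ ω)| ≤ ∫ ω, |Real.sin (Z p₀ ω)| := by
            simpa [Real.norm_eq_abs] using
              norm_integral_le_integral_norm (fun ω => Real.sin (Z p₀ ω)) (μ := ℙ)
        _ ≤ ∫ _ω, x₀ := by
            refine integral_mono ?_ (integrable_const _) (fun ω => ?_)
            · exact auxSR_int_bdd _ (Real.measurable_sin.comp (hZmeas p₀)).abs 1
                (fun ω => by rw [abs_abs]; exact Real.abs_sin_le_one _)
            · exact (auxSR_abs_sin _).trans (hZbd p₀ ω)
        _ = x₀ := by simp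
    have h1 : |Real.sin (Z p ω)| ≤ x₀ := (auxSR_abs_sin _).trans (hZbd p ω)
    rw [hXs]
    simp only
    calc |Real.sin (Z p ω) - Es| ≤ |Real.sin (Z p ω)| + |Es| := abs_sub _ _
      _ ≤ 2 * x₀ := by linarith
  have hXc_cen : ∀ p, ∫ ω, Xc p ω = 0 := by
    intro p
    rw [hXc]
    simp only
    rw [integral_sub (hint_cos p) (integrable_const _), hcos_eq p, integral_const]
    simp
  have hXs_cen : ∀ p, ∫ ω, Xs p ω = 0 := by
    intro p
    rw [hXs]
    simp only
    rw [integral_sub (hint_sin p) (integrable_const _), hsin_eq p, integral_const]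
    simp
  -- cardinality and positivity bookkeeping
  have hcard : (Fintype.card ((Fin r × Fin r) × Fin nd) : ℝ) = (r:ℝ) ^ 2 * nd := by
    rw [Fintype.card_prod, Fintype.card_prod, Fintype.card_fin, Fintype.card_fin]
    push_cast
    ring
  set M : ℝ := (r:ℝ) ^ 2 * nd with hM
  have hMpos : 0 < M := by rw [hM]; positivity
  set τ : ℝ := c * srL1 qγ * ε with hτ
  have hτpos : 0 < τ := by rw [hτ]; positivity
  have hCne : ((M : ℝ) : ℂ) ≠ 0 := by exact_mod_cast hMpos.ne'
  -- decomposition of srG - 1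
  have hGdecomp : ∀ ω, srG r nd b 0 qγ ω - 1 = (EC - 1) + ((M : ℝ) : ℂ)⁻¹
      * (∑ p : (Fin r × Fin r) × Fin nd,
          (Complex.exp (Complex.I * ((Z p ω : ℝ) : ℂ)) - EC)) := by
    intro ω
    have h1 : srG r nd b 0 qγ ω = ((M : ℝ) : ℂ)⁻¹
        * ∑ p : (Fin r × Fin r) × Fin nd, Complex.exp (Complex.I * ((Z p ω : ℝ) : ℂ)) := by
      rw [srG, Fintype.sum_prod_type
        (f := fun p : (Fin r × Fin r) × Fin nd =>
          Complex.exp (Complex.I * ((Z p ω : ℝ) : ℂ)))]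
      congr 1
      · congr 1
        rw [hM]
        push_cast
        ring
      · refine Finset.sum_congr rfl (fun d _ => Finset.sum_congr rfl (fun j _ => ?_))
        rw [hZ]
        simp
    have h2 : ∑ p : (Fin r × Fin r) × Fin nd,
        (Complex.exp (Complex.I * ((Z p ω : ℝ) : ℂ)) - EC)
        = (∑ p : (Fin r × Fin r) × Fin nd, Complex.exp (Complex.I * ((Z p ω : ℝ) : ℂ)))
          - ((M : ℝ) : ℂ) * EC := by
      rw [Finset.sum_sub_distrib, Finset.sum_const, Finset.card_univ, nsmul_eq_mul]
      congr 2
      rw [← hcard]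
      norm_cast
    rw [h1, h2, mul_sub, ← mul_assoc, inv_mul_cancel₀ hCne, one_mul]
    ring
  -- the threshold bookkeeping
  have hsqrt2 := auxSR_sqrt2
  have hTA : srL2 qγ * srL2 μv + x₀ ^ 2 / 2 + x₀ ^ 3 / 6 + Real.sqrt 2 * τ
      ≤ srL2 qγ * srL2 μv + srL1 qγ ^ 2 * εr ^ 2 / 2
        + Real.sqrt 2 * (c * srL1 qγ * ε + srL1 qγ ^ 3 * εr ^ 3 / 3) := by
    have hx2 : x₀ ^ 2 = srL1 qγ ^ 2 * εr ^ 2 := by rw [hx₀def]; ring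
    have hx3 : x₀ ^ 3 = srL1 qγ ^ 3 * εr ^ 3 := by rw [hx₀def]; ring
    have hx3nn : 0 ≤ srL1 qγ ^ 3 * εr ^ 3 := by positivity
    rw [hx2, hx3, hτ]
    have h := mul_le_mul_of_nonneg_right hsqrt2 hx3nn
    rw [one_mul] at h
    have h6 : srL1 qγ ^ 3 * εr ^ 3 / 6 ≤ Real.sqrt 2 * (srL1 qγ ^ 3 * εr ^ 3 / 3) := by
      have he2 : Real.sqrt 2 * (srL1 qγ ^ 3 * εr ^ 3 / 3)
          = Real.sqrt 2 * (srL1 qγ ^ 3 * εr ^ 3) / 3 := by ring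
      rw [he2]
      linarith
    have he : Real.sqrt 2 * (c * srL1 qγ * ε + srL1 qγ ^ 3 * εr ^ 3 / 3)
        = Real.sqrt 2 * (c * srL1 qγ * ε) + Real.sqrt 2 * (srL1 qγ ^ 3 * εr ^ 3 / 3) :=
      mul_add _ _ _
    linarith [h6, he.le, he.ge]
  -- event inclusion
  have hsub : {ω : Ω | srL2 qγ * srL2 μv + srL1 qγ ^ 2 * εr ^ 2 / 2
          + Real.sqrt 2 * (c * srL1 qγ * ε + srL1 qγ ^ 3 * εr ^ 3 / 3)
        ≤ ‖srG r nd b 0 qγ ω - 1‖}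
      ⊆ {ω : Ω | τ * M ≤ |∑ p : (Fin r × Fin r) × Fin nd, Xc p ω|}
        ∪ {ω : Ω | τ * M ≤ |∑ p : (Fin r × Fin r) × Fin nd, Xs p ω|} := by
    intro ω hω
    simp only [Set.mem_setOf_eq] at hω
    set S : ℂ := ∑ p : (Fin r × Fin r) × Fin nd,
      (Complex.exp (Complex.I * ((Z p ω : ℝ) : ℂ)) - EC) with hS
    have h5 : ‖srG r nd b 0 qγ ω - 1‖
        ≤ ‖EC - 1‖ + ‖((M : ℝ) : ℂ)⁻¹ * S‖ := by
      rw [hGdecomp ω]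
      exact norm_add_le _ _
    have h3 : Real.sqrt 2 * τ ≤ ‖((M : ℝ) : ℂ)⁻¹ * S‖ := by
      linarith [hA, hTA]
    have hre : (((M : ℝ) : ℂ)⁻¹ * S).re
        = M⁻¹ * ∑ p : (Fin r × Fin r) × Fin nd, Xc p ω := by
      rw [← Complex.ofReal_inv]
      have hre2 : ∀ (x : ℝ) (z : ℂ), ((x : ℂ) * z).re = x * z.re := fun x z => by
        simp [Complex.mul_re]
      rw [hre2, hS, Complex.re_sum]
      congr 1
      refine Finset.sum_congr rfl (fun p _ => ?_)
      rw [Complex.sub_re, hECre, hXc]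
      simp only
      congr 1
      exact auxSR_exp_I_re (Z p ω)
    have him : (((M : ℝ) : ℂ)⁻¹ * S).im
        = M⁻¹ * ∑ p : (Fin r × Fin r) × Fin nd, Xs p ω := by
      rw [← Complex.ofReal_inv]
      have him2 : ∀ (x : ℝ) (z : ℂ), ((x : ℂ) * z).im = x * z.im := fun x z => by
        simp [Complex.mul_im]
      rw [him2, hS, Complex.im_sum]
      congr 1
      refine Finset.sum_congr rfl (fun p _ => ?_)
      rw [Complex.sub_im, hECim, hXs]
      simp only
      congr 1
      exact auxSR_exp_I_im (Z p ω)
    have hMinv : (0:ℝ) < M⁻¹ := by positivity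
    rcases auxSR_re_im hτpos h3 with h | h
    · left
      simp only [Set.mem_setOf_eq]
      rw [hre, abs_mul, abs_of_pos hMinv] at h
      calc τ * M ≤ (M⁻¹ * |∑ p : (Fin r × Fin r) × Fin nd, Xc p ω|) * M :=
            mul_le_mul_of_nonneg_right h hMpos.le
        _ = |∑ p : (Fin r × Fin r) × Fin nd, Xc p ω| := by field_simp
    · right
      simp only [Set.mem_setOf_eq]
      rw [him, abs_mul, abs_of_pos hMinv] at h
      calc τ * M ≤ (M⁻¹ * |∑ p : (Fin r × Fin r) × Fin nd, Xs p ω|) * M :=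
            mul_le_mul_of_nonneg_right h hMpos.le
        _ = |∑ p : (Fin r × Fin r) × Fin nd, Xs p ω| := by field_simp
  -- Hoeffding bounds
  have hac : (0:ℝ) < x₀ ^ 2 / 2 := by positivity
  have has : (0:ℝ) < 2 * x₀ := by positivity
  have hspos : (0:ℝ) < τ * M := by positivity
  have hre_bound := auxSR_hoeffding_abs Xc hXcm hXcind hac hXc_bd hXc_cen hspos
  have him_bound := auxSR_hoeffding_abs Xs hXsm hXsind has hXs_bd hXs_cen hspos
  -- exponent comparisons
  have hexp_re : -(τ * M) ^ 2
      / (2 * (Fintype.card ((Fin r × Fin r) × Fin nd) : ℝ) * (x₀ ^ 2 / 2) ^ 2)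
      ≤ -(c ^ 2 * nd) / 8 := by
    rw [hcard,
      div_le_div_iff₀ (by positivity) (by norm_num : (0:ℝ) < 8), neg_mul, neg_mul,
      neg_le_neg_iff]
    have hA2 : (c ^ 2 * nd) * (2 * M * (x₀ ^ 2 / 2) ^ 2)
        = c ^ 2 * (r:ℝ) ^ 2 * (nd:ℝ) ^ 2 * x₀ ^ 4 / 2 := by rw [hM]; ring
    have hA1 : (τ * M) ^ 2 * 8 = 8 * (c ^ 2 * (r:ℝ) ^ 2 * (nd:ℝ) ^ 2 * x₀ ^ 2) := by
      rw [hτ, hM, hx₀def, hεr]; ring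
    rw [hA2, hA1]
    have h16 : x₀ ^ 2 ≤ 16 := by
      have h4 : x₀ * x₀ ≤ 2 * 2 := mul_le_mul hx₀le2 hx₀le2 hx₀pos.le (by norm_num)
      have h5 : x₀ ^ 2 = x₀ * x₀ := sq x₀
      linarith
    have hpos : (0:ℝ) ≤ c ^ 2 * (r:ℝ) ^ 2 * (nd:ℝ) ^ 2 * x₀ ^ 2 := by positivity
    have hprod := mul_le_mul_of_nonneg_left h16 hpos
    linarith [hprod]
  have hexp_im : -(τ * M) ^ 2
      / (2 * (Fintype.card ((Fin r × Fin r) × Fin nd) : ℝ) * (2 * x₀) ^ 2)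
      ≤ -(c ^ 2 * nd) / 8 := by
    rw [hcard,
      div_le_div_iff₀ (by positivity) (by norm_num : (0:ℝ) < 8), neg_mul, neg_mul,
      neg_le_neg_iff]
    refine le_of_eq ?_
    rw [hτ, hM, hx₀def, hεr]
    ring
  -- put everything together
  calc (ℙ {ω | srL2 qγ * srL2 μv + srL1 qγ ^ 2 * εr ^ 2 / 2
          + Real.sqrt 2 * (c * srL1 qγ * ε + srL1 qγ ^ 3 * εr ^ 3 / 3)
        ≤ ‖srG r nd b 0 qγ ω - 1‖}).toReal
      ≤ ((ℙ {ω : Ω | τ * M ≤ |∑ p : (Fin r × Fin r) × Fin nd, Xc p ω|})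
        + ℙ {ω : Ω | τ * M ≤ |∑ p : (Fin r × Fin r) × Fin nd, Xs p ω|}).toReal := by
        refine ENNReal.toReal_mono (by finiteness) ?_
        exact (measure_mono hsub).trans (measure_union_le _ _)
    _ = (ℙ {ω : Ω | τ * M ≤ |∑ p : (Fin r × Fin r) × Fin nd, Xc p ω|}).toReal
        + (ℙ {ω : Ω | τ * M ≤ |∑ p : (Fin r × Fin r) × Fin nd, Xs p ω|}).toReal :=
        ENNReal.toReal_add (measure_ne_top _ _) (measure_ne_top _ _)
    _ ≤ 2 * Real.exp (-(τ * M) ^ 2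
          / (2 * (Fintype.card ((Fin r × Fin r) × Fin nd) : ℝ) * (x₀ ^ 2 / 2) ^ 2))
        + 2 * Real.exp (-(τ * M) ^ 2
          / (2 * (Fintype.card ((Fin r × Fin r) × Fin nd) : ℝ) * (2 * x₀) ^ 2)) :=
        add_le_add hre_bound him_bound
    _ ≤ 2 * Real.exp (-(c ^ 2 * nd) / 8) + 2 * Real.exp (-(c ^ 2 * nd) / 8) :=
        add_le_add
          (mul_le_mul_of_nonneg_left (Real.exp_le_exp.2 hexp_re) (by norm_num))
          (mul_le_mul_of_nonneg_left (Real.exp_le_exp.2 hexp_im) (by norm_num))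
    _ = 4 * Real.exp (-(c ^ 2 * nd) / 8) := by ring
end

section
/- With the setup below, let α ∈ ℤ² with k + αN ∈ D_HR and α ≠ γ, and suppose each component of α − γ is congruent to 0 or r/2 modulo r. Then, pointwise on the probability space (i.e., surely), |Re(G_α(k'))| ≤ ‖q_α‖₁² ε_r² / 2. -/
open MeasureTheory ProbabilityTheory

lemma aux_factor (r : ℕ) (c : ℤ) (hc : Odd c) (hre : Even r) :
    ∑ d : Fin r, ((-1 : ℝ) ^ (c * ((d : ℕ) : ℤ))) = 0 := by
  have h1 : ∀ d : Fin r, ((-1 : ℝ) ^ (c * ((d : ℕ) : ℤ))) = (-1 : ℝ) ^ (d : ℕ) := by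
    intro d
    rw [zpow_mul, Odd.neg_one_zpow hc, zpow_natCast]
  simp_rw [h1]
  rw [Fin.sum_univ_eq_sum_range (fun i => (-1 : ℝ) ^ i), neg_one_geom_sum, if_pos hre]


lemma aux_abs_neg_one_zpow (m : ℤ) : |(-1 : ℝ) ^ m| = 1 := by
  rcases Int.even_or_odd m with h | h
  · rw [h.neg_one_zpow, abs_one]
  · rw [h.neg_one_zpow, abs_neg, abs_one]

set_option maxHeartbeats 1000000 in
/-- Deterministic bound (38): when every component of `α − γ` is congruent to `0` or `r/2`
modulo `r`, `|Re(G_α(k'))| ≤ ‖q_α‖₁² εr² / 2` surely. -/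
theorem stmt_9
    {Ω : Type*} [MeasureSpace Ω] [IsProbabilityMeasure (ℙ : Measure Ω)]
    (r N nd : ℕ) (hr : 2 ≤ r) (hN : 1 ≤ N) (hnd : 1 ≤ nd)
    (ε εr : ℝ) (hε : 0 < ε) (hεr : εr = ε * r)
    (b : Fin r × Fin r → Fin nd → Ω → ℝ × ℝ)
    (hbmeas : ∀ d j, Measurable (b d j))
    (hbdd : ∀ d j ω, |(b d j ω).1| ≤ εr ∧ |(b d j ω).2| ≤ εr)
    (k' k γ : ℤ × ℤ)
    (hk'γ : k' = (k.1 + γ.1 * N, k.2 + γ.2 * N))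
    (hk'HR : -(r * N : ℤ) ≤ 2 * k'.1 ∧ 2 * k'.1 < r * N ∧
             -(r * N : ℤ) ≤ 2 * k'.2 ∧ 2 * k'.2 < r * N)
    (hkLR : -(N : ℤ) ≤ 2 * k.1 ∧ 2 * k.1 < N ∧ -(N : ℤ) ≤ 2 * k.2 ∧ 2 * k.2 < N)
    (qf : ℤ × ℤ → ℝ × ℝ)
    (hqf : ∀ α : ℤ × ℤ, qf α = (2 * Real.pi * ((k.1 + α.1 * N : ℤ) : ℝ) / ((r : ℝ) * N),
                                2 * Real.pi * ((k.2 + α.2 * N : ℤ) : ℝ) / ((r : ℝ) * N)))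
    (α : ℤ × ℤ)
    (hαHR : -(r * N : ℤ) ≤ 2 * (k.1 + α.1 * N) ∧ 2 * (k.1 + α.1 * N) < r * N ∧
             -(r * N : ℤ) ≤ 2 * (k.2 + α.2 * N) ∧ 2 * (k.2 + α.2 * N) < r * N)
    (hαγ : α ≠ γ)
    (hcong : ((((r : ℤ) ∣ (α - γ).1) ∨ ∃ m : ℤ, 2 * (α - γ).1 = (2 * m + 1) * r) ∧
      (((r : ℤ) ∣ (α - γ).2) ∨ ∃ m : ℤ, 2 * (α - γ).2 = (2 * m + 1) * r))) :
    ∀ ω, |(srG r nd b (α - γ) (qf α) ω).re| ≤ srL1 (qf α) ^ 2 * εr ^ 2 / 2 := by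
  intro ω
  obtain ⟨hc1, hc2⟩ := hcong
  set δ : ℤ × ℤ := α - γ with hδdef
  have hδ1 : δ.1 = α.1 - γ.1 := rfl
  have hδ2 : δ.2 = α.2 - γ.2 := rfl
  have hN0 : (0 : ℤ) < (N : ℤ) := by exact_mod_cast hN
  have hr0 : (0 : ℤ) < (r : ℤ) := by positivity
  -- bounds |δ.i| < r
  have hbound1 : -(r : ℤ) < δ.1 ∧ δ.1 < r := by
    have h1 := hαHR.1; have h2 := hαHR.2.1
    have h3 : -(r * N : ℤ) ≤ 2 * (k.1 + γ.1 * N) := by rw [hk'γ] at hk'HR; exact hk'HR.1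
    have h4 : 2 * (k.1 + γ.1 * N) < r * N := by rw [hk'γ] at hk'HR; exact hk'HR.2.1
    constructor
    · have : (-(r:ℤ)) * N < δ.1 * N := by rw [hδ1]; nlinarith
      exact lt_of_mul_lt_mul_right this (le_of_lt hN0)
    · have : δ.1 * N < (r:ℤ) * N := by rw [hδ1]; nlinarith
      exact lt_of_mul_lt_mul_right this (le_of_lt hN0)
  have hbound2 : -(r : ℤ) < δ.2 ∧ δ.2 < r := by
    have h1 := hαHR.2.2.1; have h2 := hαHR.2.2.2
    have h3 : -(r * N : ℤ) ≤ 2 * (k.2 + γ.2 * N) := by rw [hk'γ] at hk'HR; exact hk'HR.2.2.1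
    have h4 : 2 * (k.2 + γ.2 * N) < r * N := by rw [hk'γ] at hk'HR; exact hk'HR.2.2.2
    constructor
    · have : (-(r:ℤ)) * N < δ.2 * N := by rw [hδ2]; nlinarith
      exact lt_of_mul_lt_mul_right this (le_of_lt hN0)
    · have : δ.2 * N < (r:ℤ) * N := by rw [hδ2]; nlinarith
      exact lt_of_mul_lt_mul_right this (le_of_lt hN0)
  have hdvdgen : ∀ z : ℤ, -(r : ℤ) < z → z < r → (r : ℤ) ∣ z → z = 0 := by
    rintro z hlo hhi ⟨t, ht⟩
    rcases lt_trichotomy t 0 with h | h | h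
    · have : (r:ℤ) * t ≤ (r:ℤ) * (-1) := mul_le_mul_of_nonneg_left (by omega) hr0.le
      have : (r:ℤ) * (-1) = -(r:ℤ) := by ring
      linarith [mul_le_mul_of_nonneg_left (show t ≤ -1 by omega) hr0.le]
    · rw [ht, h, mul_zero]
    · have : (r:ℤ) * 1 ≤ (r:ℤ) * t := mul_le_mul_of_nonneg_left (by omega) hr0.le
      linarith
  have hdvd1 : (r : ℤ) ∣ δ.1 → δ.1 = 0 := hdvdgen _ hbound1.1 hbound1.2
  have hdvd2 : (r : ℤ) ∣ δ.2 → δ.2 = 0 := hdvdgen _ hbound2.1 hbound2.2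
  have hδne : ¬(δ.1 = 0 ∧ δ.2 = 0) := by
    rintro ⟨h1, h2⟩
    apply hαγ
    have : δ = 0 := Prod.ext h1 h2
    have := sub_eq_zero.mp (by exact_mod_cast this : α - γ = 0)
    exact this
  -- extract c₁, c₂
  have hEvenOf : ∀ m : ℤ, 2 * (m * 2 + 1) ∣ 0 → True := fun _ _ => trivial
  have hEvenr : ∀ m d : ℤ, 2 * d = (2 * m + 1) * r → Even r := by
    intro m d h
    have h2 : Even ((2 * m + 1) * (r:ℤ)) := ⟨d, by linarith⟩
    rcases Int.even_mul.mp h2 with h3 | h3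
    · rcases h3 with ⟨t, ht⟩; omega
    · exact Int.even_coe_nat r |>.mp h3
  obtain ⟨c₁, c₂, hcc1, hcc2, hodd, hEr⟩ :
      ∃ c₁ c₂ : ℤ, 2 * δ.1 = c₁ * r ∧ 2 * δ.2 = c₂ * r ∧ (Odd c₁ ∨ Odd c₂) ∧ Even r := by
    rcases hc1 with h1 | ⟨m1, hm1⟩
    · have hz1 := hdvd1 h1
      rcases hc2 with h2 | ⟨m2, hm2⟩
      · exact absurd ⟨hz1, hdvd2 h2⟩ hδne
      · exact ⟨0, 2 * m2 + 1, by rw [zero_mul]; omega, hm2, Or.inr ⟨m2, by ring⟩,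
          hEvenr m2 _ hm2⟩
    · rcases hc2 with h2 | ⟨m2, hm2⟩
      · exact ⟨2 * m1 + 1, 0, hm1, by have := hdvd2 h2; rw [zero_mul]; omega, Or.inl ⟨m1, by ring⟩,
          hEvenr m1 _ hm1⟩
      · exact ⟨2 * m1 + 1, 2 * m2 + 1, hm1, hm2, Or.inl ⟨m1, by ring⟩, hEvenr m1 _ hm1⟩
  -- setup reals
  set q : ℝ × ℝ := qf α with hq
  set L : ℝ := srL1 q with hL
  have hεr0 : 0 ≤ εr := by rw [hεr]; positivity
  have hL0 : 0 ≤ L := by rw [hL]; unfold srL1; positivity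
  set x : Fin r × Fin r → Fin nd → ℝ :=
    fun d j => q.1 * (b d j ω).1 + q.2 * (b d j ω).2 with hxdef
  have hx : ∀ d j, |x d j| ≤ L * εr := by
    intro d j
    calc |x d j| ≤ |q.1 * (b d j ω).1| + |q.2 * (b d j ω).2| := abs_add_le _ _
      _ = |q.1| * |(b d j ω).1| + |q.2| * |(b d j ω).2| := by rw [abs_mul, abs_mul]
      _ ≤ |q.1| * εr + |q.2| * εr := by
          exact add_le_add (mul_le_mul_of_nonneg_left (hbdd d j ω).1 (abs_nonneg _))
            (mul_le_mul_of_nonneg_left (hbdd d j ω).2 (abs_nonneg _))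
      _ = L * εr := by rw [hL]; unfold srL1; ring
  set s : Fin r × Fin r → ℝ :=
    fun d => (-1 : ℝ) ^ (c₁ * ((d.1 : ℕ) : ℤ) + c₂ * ((d.2 : ℕ) : ℤ)) with hsdef
  have hrR0 : ((r : ℝ)) ≠ 0 := by positivity
  -- exp identity
  have hexp : ∀ d : Fin r × Fin r,
      Complex.exp (-Complex.I *
          ((2 * Real.pi / (r : ℝ) *
            ((δ.1 * ((d.1 : ℕ) : ℤ) + δ.2 * ((d.2 : ℕ) : ℤ) : ℤ) : ℝ) : ℝ) : ℂ)) =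
        ((s d : ℝ) : ℂ) := by
    intro d
    set m : ℤ := c₁ * ((d.1 : ℕ) : ℤ) + c₂ * ((d.2 : ℕ) : ℤ) with hm
    have hmZ : 2 * (δ.1 * ((d.1 : ℕ) : ℤ) + δ.2 * ((d.2 : ℕ) : ℤ)) = m * r := by
      rw [hm]; linear_combination ((d.1 : ℕ) : ℤ) * hcc1 + ((d.2 : ℕ) : ℤ) * hcc2
    have hmR : 2 * ((δ.1 * ((d.1 : ℕ) : ℤ) + δ.2 * ((d.2 : ℕ) : ℤ) : ℤ) : ℝ) = (m : ℝ) * r := by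
      exact_mod_cast congrArg (fun z : ℤ => (z : ℝ)) hmZ
    have hmR' : 2 * ((δ.1 : ℝ) * ((d.1 : ℕ) : ℝ) + (δ.2 : ℝ) * ((d.2 : ℕ) : ℝ))
        = (m : ℝ) * r := by exact_mod_cast hmZ
    have harg : 2 * Real.pi / (r : ℝ) *
        ((δ.1 * ((d.1 : ℕ) : ℤ) + δ.2 * ((d.2 : ℕ) : ℤ) : ℤ) : ℝ) = Real.pi * m := by
      field_simp
      push_cast
      linear_combination hmR' 
    rw [harg]
    have h1 : (-Complex.I * ((Real.pi * (m : ℝ) : ℝ) : ℂ)) = (m : ℤ) * (-(Real.pi * Complex.I)) := by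
      push_cast; ring
    rw [h1, Complex.exp_int_mul]
    have h2 : Complex.exp (-((Real.pi : ℂ) * Complex.I)) = -1 := by
      rw [Complex.exp_neg, Complex.exp_pi_mul_I]; norm_num
    rw [h2, hsdef]
    push_cast
    rfl
  -- coefficient
  have hcoef : ((r : ℂ) ^ 2 * (nd : ℂ))⁻¹ = ((((r : ℝ) ^ 2 * nd)⁻¹ : ℝ) : ℂ) := by
    push_cast
    rfl
  -- real part formula
  have hre : (srG r nd b δ q ω).re =
      ((r : ℝ) ^ 2 * nd)⁻¹ * ∑ d : Fin r × Fin r, ∑ j : Fin nd, s d * Real.cos (x d j) := by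
    unfold srG
    rw [hcoef, Complex.re_ofReal_mul]
    congr 1
    rw [Complex.re_sum]
    refine Finset.sum_congr rfl fun d _ => ?_
    rw [Complex.re_sum]
    refine Finset.sum_congr rfl fun j _ => ?_
    rw [hexp d, Complex.re_ofReal_mul, mul_comm Complex.I, Complex.exp_ofReal_mul_I_re]
  -- sum of signs is zero
  have hs0 : ∑ d : Fin r × Fin r, s d = 0 := by
    have hsplit : ∑ d : Fin r × Fin r, s d =
        (∑ d1 : Fin r, (-1 : ℝ) ^ (c₁ * ((d1 : ℕ) : ℤ))) *
        (∑ d2 : Fin r, (-1 : ℝ) ^ (c₂ * ((d2 : ℕ) : ℤ))) := by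
      rw [Finset.sum_mul_sum, Fintype.sum_prod_type]
      refine Finset.sum_congr rfl fun d1 _ => Finset.sum_congr rfl fun d2 _ => ?_
      rw [hsdef]
      exact zpow_add₀ (by norm_num) _ _
    rw [hsplit]
    rcases hodd with h | h
    · rw [aux_factor r c₁ h hEr, zero_mul]
    · rw [aux_factor r c₂ h hEr, mul_zero]
  -- center the cosines
  have hcenter : ∑ d : Fin r × Fin r, ∑ j : Fin nd, s d * Real.cos (x d j) =
      ∑ d : Fin r × Fin r, ∑ j : Fin nd, s d * (Real.cos (x d j) - 1) := by
    have hinner : ∀ d : Fin r × Fin r, ∑ j : Fin nd, s d * Real.cos (x d j)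
        = (∑ j : Fin nd, s d * (Real.cos (x d j) - 1)) + (nd : ℝ) * s d := by
      intro d
      have h1 : ∀ j : Fin nd,
          s d * Real.cos (x d j) = s d * (Real.cos (x d j) - 1) + s d := fun j => by ring
      rw [Finset.sum_congr rfl (fun j _ => h1 j), Finset.sum_add_distrib, Finset.sum_const,
        Finset.card_univ, Fintype.card_fin, nsmul_eq_mul]
    rw [Finset.sum_congr rfl (fun d _ => hinner d), Finset.sum_add_distrib,
      ← Finset.mul_sum, hs0, mul_zero, add_zero]
  -- bound each term
  have hterm : ∀ d j, |s d * (Real.cos (x d j) - 1)| ≤ L ^ 2 * εr ^ 2 / 2 := by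
    intro d j
    have hs1 : |s d| = 1 := by
      exact aux_abs_neg_one_zpow _
    rw [abs_mul, hs1, one_mul, abs_sub_comm, abs_of_nonneg (by linarith [Real.cos_le_one (x d j)])]
    have h1 : 1 - (x d j) ^ 2 / 2 ≤ Real.cos (x d j) := Real.one_sub_sq_div_two_le_cos
    have h2 : (x d j) ^ 2 ≤ (L * εr) ^ 2 := by
      rw [← sq_abs]
      exact pow_le_pow_left₀ (abs_nonneg _) (hx d j) 2
    rw [mul_pow] at h2
    have h3 : 1 - Real.cos (x d j) ≤ x d j ^ 2 / 2 := by linarith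
    have h4 : x d j ^ 2 / 2 ≤ L ^ 2 * εr ^ 2 / 2 :=
      (div_le_div_iff_of_pos_right (by norm_num : (0:ℝ) < 2)).mpr h2
    exact le_trans h3 h4
  -- final bound
  rw [hre, hcenter]
  have hsum : |∑ d : Fin r × Fin r, ∑ j : Fin nd, s d * (Real.cos (x d j) - 1)| ≤
      (r : ℝ) ^ 2 * nd * (L ^ 2 * εr ^ 2 / 2) := by
    calc |∑ d : Fin r × Fin r, ∑ j : Fin nd, s d * (Real.cos (x d j) - 1)|
        ≤ ∑ d : Fin r × Fin r, |∑ j : Fin nd, s d * (Real.cos (x d j) - 1)| :=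
          Finset.abs_sum_le_sum_abs _ _
      _ ≤ ∑ d : Fin r × Fin r, ∑ j : Fin nd, |s d * (Real.cos (x d j) - 1)| :=
          Finset.sum_le_sum fun d _ => Finset.abs_sum_le_sum_abs _ _
      _ ≤ ∑ d : Fin r × Fin r, ∑ j : Fin nd, (L ^ 2 * εr ^ 2 / 2) :=
          Finset.sum_le_sum fun d _ => Finset.sum_le_sum fun j _ => hterm d j
      _ = (r : ℝ) ^ 2 * nd * (L ^ 2 * εr ^ 2 / 2) := by
          simp [Finset.sum_const, Finset.card_univ]; ring
  have hcpos : (0 : ℝ) < (r : ℝ) ^ 2 * nd := by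
    have : (0:ℝ) < (nd : ℝ) := by exact_mod_cast hnd
    positivity
  rw [abs_mul, abs_of_nonneg (le_of_lt (inv_pos.mpr hcpos))]
  calc ((r : ℝ) ^ 2 * nd)⁻¹ * |∑ d : Fin r × Fin r, ∑ j : Fin nd, s d * (Real.cos (x d j) - 1)|
      ≤ ((r : ℝ) ^ 2 * nd)⁻¹ * ((r : ℝ) ^ 2 * nd * (L ^ 2 * εr ^ 2 / 2)) := by
        exact mul_le_mul_of_nonneg_left hsum (le_of_lt (inv_pos.mpr hcpos))
    _ = L ^ 2 * εr ^ 2 / 2 := by field_simp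
end

section
/- (Theorem 1, aliasing part, per frequency.) With the setup below, let A = { α ∈ ℤ² : k + αN ∈ D_HR, α ≠ γ }, let Z_γ ∈ ℂ be nonzero and (Z_α)_{α∈A} be complex numbers, and let p₂, P₂ ∈ (0,1). Assume: (i) the b_{dj} are identically distributed; (ii) the family (G_α(k'))_{α∈A} is mutually independent; (iii) for every α ∈ A and c > 0, P( |G_α(k')| ≥ √2 ( c‖q_α‖₁ ε + f(q_α, ε_r) ) ) ≤ 4 exp(−c² n_d), where f(q, ε_r) = ‖q‖₁² ε_r²/2 + ‖q‖₁³ ε_r³/6; (iv) there exists c₂ > 0 with √2 Σ_{α∈A} |Z_α/Z_γ| ( c₂‖q_α‖₁ ε + f(q_α, ε_r) ) ≤ p₂. If n_d ≥ (1/c₂²) · log( 4 / (1 − P₂^{1/(r²−1)}) ), then P( |Σ_{α∈A} Z_α G_α(k')| ≤ p₂ |Z_γ| ) ≥ P₂. -/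
open MeasureTheory ProbabilityTheory

lemma sr_aux_card (r N : ℕ) (k : ℤ) :
    ∃ L : ℤ, ∀ α : ℤ, -(r*N:ℤ) ≤ 2*(k + α*N) → 2*(k+α*N) < r*N →
      α ∈ Finset.Icc L (L + r - 1) := by
  rcases Nat.eq_zero_or_pos N with hN0 | hN
  · exact ⟨0, fun α h1 h2 => by simp [hN0] at h1 h2; omega⟩
  have h2N : (0:ℚ) < 2*N := by positivity
  refine ⟨⌈(-(r*N:ℚ) - 2*k) / (2*N)⌉, fun α h1 h2 => ?_⟩
  rw [Finset.mem_Icc]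
  have h1' : (-(r*N:ℚ) - 2*k) / (2*N) ≤ α := by
    rw [div_le_iff₀ h2N]
    have h1q : (-(r*N:ℚ)) ≤ 2*((k:ℚ) + (α:ℚ)*(N:ℚ)) := by exact_mod_cast h1
    nlinarith
  have h2' : ((α:ℚ) - r) < (-(r*N:ℚ) - 2*k) / (2*N) := by
    rw [lt_div_iff₀ h2N]
    have h2q : 2*((k:ℚ) + (α:ℚ)*(N:ℚ)) < (r:ℚ)*(N:ℚ) := by exact_mod_cast h2
    nlinarith
  constructor
  · exact Int.ceil_le.2 h1'
  · have := lt_of_lt_of_le h2' (Int.le_ceil _)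
    have : (α : ℚ) < (⌈(-(r*N:ℚ) - 2*k) / (2*N)⌉ : ℚ) + r := by linarith
    have : α < ⌈(-(r*N:ℚ) - 2*k) / (2*N)⌉ + r := by exact_mod_cast this
    omega

lemma sr_G_meas {Ω : Type*} [MeasurableSpace Ω] (r nd : ℕ)
    (b : Fin r × Fin r → Fin nd → Ω → ℝ × ℝ) (hbmeas : ∀ d j, Measurable (b d j))
    (δ : ℤ × ℤ) (q : ℝ × ℝ) :
    Measurable (fun ω => srG r nd b δ q ω) := by
  unfold srG
  apply Measurable.const_mul
  apply Finset.measurable_sum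
  intro d _
  apply Finset.measurable_sum
  intro j _
  apply Measurable.const_mul
  apply Complex.measurable_exp.comp
  apply Measurable.const_mul
  exact Complex.measurable_ofReal.comp
    (((measurable_fst.comp (hbmeas d j)).const_mul q.1).add
      ((measurable_snd.comp (hbmeas d j)).const_mul q.2))

/-- Theorem 1, aliasing part, per frequency: if `n_d ≥ (1/c₂²) log(4/(1 − P₂^{1/(r²−1)}))`
then the total aliasing error is at most `p₂ |Z_γ|` with probability at least `P₂`. -/
theorem stmt_13
    {Ω : Type*} [MeasureSpace Ω] [IsProbabilityMeasure (ℙ : Measure Ω)]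
    (r N nd : ℕ) (hr : 2 ≤ r) (hN : 1 ≤ N) (hnd : 1 ≤ nd)
    (ε εr : ℝ) (hε : 0 < ε) (hεr : εr = ε * r)
    (b : Fin r × Fin r → Fin nd → Ω → ℝ × ℝ)
    (hbmeas : ∀ d j, Measurable (b d j))
    (hbdd : ∀ d j ω, |(b d j ω).1| ≤ εr ∧ |(b d j ω).2| ≤ εr)
    (hindep : iIndepFun
      (fun p : (Fin r × Fin r) × Fin nd => b p.1 p.2) ℙ)
    (hiid : ∀ d j d' j', IdentDistrib (b d j) (b d' j') ℙ ℙ)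
    (k' k γ : ℤ × ℤ)
    (hk'γ : k' = (k.1 + γ.1 * N, k.2 + γ.2 * N))
    (hk'HR : -(r * N : ℤ) ≤ 2 * k'.1 ∧ 2 * k'.1 < r * N ∧
             -(r * N : ℤ) ≤ 2 * k'.2 ∧ 2 * k'.2 < r * N)
    (hkLR : -(N : ℤ) ≤ 2 * k.1 ∧ 2 * k.1 < N ∧ -(N : ℤ) ≤ 2 * k.2 ∧ 2 * k.2 < N)
    (qf : ℤ × ℤ → ℝ × ℝ)
    (hqf : ∀ α : ℤ × ℤ, qf α = (2 * Real.pi * ((k.1 + α.1 * N : ℤ) : ℝ) / ((r : ℝ) * N),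
                                2 * Real.pi * ((k.2 + α.2 * N : ℤ) : ℝ) / ((r : ℝ) * N)))
    (A : Finset (ℤ × ℤ))
    (hA : ∀ α : ℤ × ℤ, α ∈ A ↔
      ((-(r * N : ℤ) ≤ 2 * (k.1 + α.1 * N) ∧ 2 * (k.1 + α.1 * N) < r * N ∧
        -(r * N : ℤ) ≤ 2 * (k.2 + α.2 * N) ∧ 2 * (k.2 + α.2 * N) < r * N) ∧ α ≠ γ))
    (Zγ : ℂ) (hZγ : Zγ ≠ 0) (Z : ℤ × ℤ → ℂ)
    (p₂ P₂ : ℝ) (hp₂ : p₂ ∈ Set.Ioo (0:ℝ) 1) (hP₂ : P₂ ∈ Set.Ioo (0:ℝ) 1)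
    (hGindep : iIndepFun
      (fun α : {x // x ∈ A} => fun ω => srG r nd b ((α : ℤ × ℤ) - γ) (qf (α : ℤ × ℤ)) ω) ℙ)
    (hGconc : ∀ α ∈ A, ∀ c : ℝ, 0 < c →
      (ℙ {ω | Real.sqrt 2 * (c * srL1 (qf α) * ε + srF (qf α) εr)
          ≤ ‖srG r nd b (α - γ) (qf α) ω‖}).toReal ≤ 4 * Real.exp (-(c ^ 2 * nd)))
    (c₂ : ℝ) (hc₂ : 0 < c₂)
    (hc₂p : Real.sqrt 2 * ∑ α ∈ A,
        ‖Z α / Zγ‖ * (c₂ * srL1 (qf α) * ε + srF (qf α) εr) ≤ p₂)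
    (hnd' : (1 / c₂ ^ 2) * Real.log (4 / (1 - P₂ ^ ((1 : ℝ) / ((r : ℝ) ^ 2 - 1)))) ≤ (nd : ℝ)) :
    P₂ ≤ (ℙ {ω | ‖∑ α ∈ A, Z α * srG r nd b (α - γ) (qf α) ω‖
        ≤ p₂ * ‖Zγ‖}).toReal := by
  -- cardinality bound
  have hAcard : A.card ≤ r * r - 1 := by
    obtain ⟨L₁, hL₁⟩ := sr_aux_card r N k.1
    obtain ⟨L₂, hL₂⟩ := sr_aux_card r N k.2
    have hγmem : γ ∈ Finset.Icc L₁ (L₁ + r - 1) ×ˢ Finset.Icc L₂ (L₂ + r - 1) := by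
      rw [Finset.mem_product]
      rw [hk'γ] at hk'HR
      exact ⟨hL₁ γ.1 hk'HR.1 hk'HR.2.1, hL₂ γ.2 hk'HR.2.2.1 hk'HR.2.2.2⟩
    have hsub : A ⊆ (Finset.Icc L₁ (L₁ + r - 1) ×ˢ Finset.Icc L₂ (L₂ + r - 1)).erase γ := by
      intro α hα
      obtain ⟨⟨h1, h2, h3, h4⟩, hne⟩ := (hA α).1 hα
      exact Finset.mem_erase.2 ⟨hne, Finset.mem_product.2 ⟨hL₁ α.1 h1 h2, hL₂ α.2 h3 h4⟩⟩
    calc A.card ≤ _ := Finset.card_le_card hsub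
      _ = (Finset.Icc L₁ (L₁ + r - 1) ×ˢ Finset.Icc L₂ (L₂ + r - 1)).card - 1 :=
        Finset.card_erase_of_mem hγmem
      _ ≤ r * r - 1 := by
        apply Nat.sub_le_sub_right
        rw [Finset.card_product, Int.card_Icc, Int.card_Icc]
        have : (L₁ + ↑r - 1 + 1 - L₁) = (r : ℤ) := by ring
        rw [this]
        have : (L₂ + ↑r - 1 + 1 - L₂) = (r : ℤ) := by ring
        rw [this, Int.toNat_natCast]
  -- numeric facts
  set x : ℝ := P₂ ^ ((1 : ℝ) / ((r : ℝ) ^ 2 - 1)) with hxdef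
  have hr2 : (2:ℝ) ≤ (r:ℝ) := by exact_mod_cast hr
  have hM : (0:ℝ) < (r:ℝ) ^ 2 - 1 := by nlinarith
  have hx0 : 0 < x := Real.rpow_pos_of_pos hP₂.1 _
  have hx1 : x < 1 := Real.rpow_lt_one hP₂.1.le hP₂.2 (by positivity)
  have h1x : 0 < 1 - x := by linarith
  have hkey : 4 * Real.exp (-(c₂ ^ 2 * nd)) ≤ 1 - x := by
    have hc2sq : (0:ℝ) < c₂ ^ 2 := by positivity
    have hL : Real.log (4 / (1 - x)) ≤ c₂ ^ 2 * nd := by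
      have h := mul_le_mul_of_nonneg_left hnd' hc2sq.le
      have he : c₂ ^ 2 * ((1 / c₂ ^ 2) * Real.log (4 / (1 - x))) = Real.log (4 / (1 - x)) := by
        field_simp
      rw [he] at h
      exact h
    have h4 : (0:ℝ) < 4 / (1 - x) := by positivity
    have := (Real.log_le_iff_le_exp h4).1 hL
    have hE : 0 < Real.exp (c₂ ^ 2 * nd) := Real.exp_pos _
    have h5 : (4:ℝ) ≤ (1 - x) * Real.exp (c₂ ^ 2 * nd) := by
      rw [div_le_iff₀ h1x] at this
      linarith [this]
    rw [Real.exp_neg]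
    rw [mul_inv_le_iff₀ hE] -- 4 * E⁻¹ ≤ 1-x ↔ 4 ≤ (1-x)*E ?
    linarith
  -- the good events
  set t : ℤ × ℤ → ℝ := fun α => Real.sqrt 2 * (c₂ * srL1 (qf α) * ε + srF (qf α) εr) with htdef
  set S : {a // a ∈ A} → Set Ω :=
    fun α => {ω | ‖srG r nd b ((α : ℤ × ℤ) - γ) (qf (α : ℤ × ℤ)) ω‖ < t α} with hSdef
  have hSmeas : ∀ α : {a // a ∈ A}, MeasurableSet (S α) := fun α =>
    sr_G_meas r nd b hbmeas _ _ (continuous_norm.measurable measurableSet_Iio)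
  have hScomap : ∀ α : {a // a ∈ A},
      MeasurableSet[MeasurableSpace.comap
        (fun ω => srG r nd b ((α : ℤ × ℤ) - γ) (qf (α : ℤ × ℤ)) ω) inferInstance] (S α) :=
    fun α => ⟨{z : ℂ | ‖z‖ < t α},
      continuous_norm.measurable measurableSet_Iio, rfl⟩
  have hprod : ℙ (⋂ α, S α) = ∏ α : {a // a ∈ A}, ℙ (S α) :=
    hGindep.meas_iInter hScomap
  -- each factor is at least x
  have hfac : ∀ α : {a // a ∈ A}, x ≤ (ℙ (S α)).toReal := by
    intro α
    have hcompl : (S α)ᶜ = {ω | t (α : ℤ × ℤ) ≤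
        ‖srG r nd b ((α : ℤ × ℤ) - γ) (qf (α : ℤ × ℤ)) ω‖} := by
      ext ω; simp [hSdef, not_lt]
    have hc : (ℙ ((S α)ᶜ)).toReal ≤ 4 * Real.exp (-(c₂ ^ 2 * nd)) := by
      rw [hcompl]
      simpa only [htdef] using hGconc (α : ℤ × ℤ) α.2 c₂ hc₂
    have h1 : ℙ ((S α)ᶜ) = 1 - ℙ (S α) := prob_compl_eq_one_sub (hSmeas α)
    have h2 : (ℙ ((S α)ᶜ)).toReal = 1 - (ℙ (S α)).toReal := by
      rw [h1, ENNReal.toReal_sub_of_le prob_le_one ENNReal.one_ne_top, ENNReal.toReal_one]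
    have h3 : 4 * Real.exp (-(c₂ ^ 2 * nd)) ≤ 1 - x := hkey
    linarith [hc, h2.symm.le, h2.le]
  -- probability of intersection at least P₂
  have hP2eq : x ^ (r * r - 1) = P₂ := by
    have h1 : ((r * r - 1 : ℕ) : ℝ) = (r : ℝ) ^ 2 - 1 := by
      have : 1 ≤ r * r := by nlinarith
      push_cast [Nat.cast_sub this]
      ring
    rw [hxdef, ← Real.rpow_natCast (P₂ ^ _) (r * r - 1), ← Real.rpow_mul hP₂.1.le, h1]
    rw [one_div, inv_mul_cancel₀ (ne_of_gt hM), Real.rpow_one]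
  have hinter : P₂ ≤ (ℙ (⋂ α, S α)).toReal := by
    rw [hprod, ENNReal.toReal_prod]
    calc P₂ = x ^ (r * r - 1) := hP2eq.symm
      _ ≤ x ^ A.card := pow_le_pow_of_le_one hx0.le hx1.le hAcard
      _ = x ^ (Finset.univ : Finset {a // a ∈ A}).card := by
        rw [Finset.card_univ, Fintype.card_coe]
      _ = ∏ _α : {a // a ∈ A}, x := by rw [Finset.prod_const, Finset.card_univ]
      _ ≤ ∏ α : {a // a ∈ A}, (ℙ (S α)).toReal :=
        Finset.prod_le_prod (fun _ _ => hx0.le) (fun α _ => hfac α)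
  -- inclusion of events
  have hsub : (⋂ α, S α) ⊆ {ω | ‖∑ α ∈ A, Z α * srG r nd b (α - γ) (qf α) ω‖
      ≤ p₂ * ‖Zγ‖} := by
    intro ω hω
    simp only [Set.mem_iInter] at hω
    have hZγ' : ‖Zγ‖ ≠ 0 := by simpa using hZγ
    calc ‖∑ α ∈ A, Z α * srG r nd b (α - γ) (qf α) ω‖
        ≤ ∑ α ∈ A, ‖Z α * srG r nd b (α - γ) (qf α) ω‖ :=
          norm_sum_le _ _
      _ ≤ ∑ α ∈ A, ‖Z α‖ * t α := by
          apply Finset.sum_le_sum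
          intro α hα
          rw [norm_mul]
          exact mul_le_mul_of_nonneg_left (le_of_lt (hω ⟨α, hα⟩)) (norm_nonneg _)
      _ = ∑ α ∈ A, ‖Zγ‖ * (Real.sqrt 2 *
            (‖Z α / Zγ‖ * (c₂ * srL1 (qf α) * ε + srF (qf α) εr))) := by
          apply Finset.sum_congr rfl
          intro α _
          rw [htdef, norm_div]
          field_simp
      _ = ‖Zγ‖ * (Real.sqrt 2 * ∑ α ∈ A,
            ‖Z α / Zγ‖ * (c₂ * srL1 (qf α) * ε + srF (qf α) εr)) := by
          rw [← Finset.mul_sum, ← Finset.mul_sum]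
      _ ≤ ‖Zγ‖ * p₂ :=
          mul_le_mul_of_nonneg_left hc₂p (norm_nonneg _)
      _ = p₂ * ‖Zγ‖ := mul_comm _ _
  calc P₂ ≤ (ℙ (⋂ α, S α)).toReal := hinter
    _ ≤ _ := ENNReal.toReal_mono (measure_ne_top _ _) (measure_mono hsub)
end

section
/- With the setup below, assume the b_{dj} are independent and identically distributed, with common characteristic value χ(q) = E[exp(i q·b_{dj})] for q ∈ ℝ². Let α ∈ ℤ² with k + αN ∈ D_HR. Then E[G_α(k')] = χ(q_γ) if α = γ, and E[G_α(k')] = 0 if α ≠ γ. -/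
open MeasureTheory ProbabilityTheory

lemma aux_geom (r : ℕ) (hr : 2 ≤ r) (m : ℤ) (hm0 : m ≠ 0) (hmr : m.natAbs < r) :
    ∑ d : Fin r, Complex.exp (-Complex.I *
      ((2 * Real.pi / (r : ℝ) * ((m * ((d : ℕ) : ℤ) : ℤ) : ℝ) : ℝ) : ℂ)) = 0 := by
  have hr0 : (r : ℝ) ≠ 0 := by positivity
  have hrC : (r : ℂ) ≠ 0 := by exact_mod_cast Nat.cast_ne_zero.mpr (by omega)
  set ζ : ℂ := Complex.exp (-Complex.I * ((2 * Real.pi / (r : ℝ) * (m : ℝ) : ℝ) : ℂ)) with hζ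
  have hterm : ∀ d : Fin r, Complex.exp (-Complex.I *
      ((2 * Real.pi / (r : ℝ) * ((m * ((d : ℕ) : ℤ) : ℤ) : ℝ) : ℝ) : ℂ)) = ζ ^ (d : ℕ) := by
    intro d
    rw [hζ, ← Complex.exp_nat_mul]
    congr 1
    push_cast
    ring
  have hζr : ζ ^ r = 1 := by
    rw [hζ, ← Complex.exp_nat_mul]
    have : (r : ℂ) * (-Complex.I * ((2 * Real.pi / (r : ℝ) * (m : ℝ) : ℝ) : ℂ)) =
        (-m : ℤ) * (2 * Real.pi * Complex.I) := by
      push_cast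
      field_simp
    rw [this, Complex.exp_int_mul_two_pi_mul_I]
  have hζ1 : ζ ≠ 1 := by
    rw [hζ, Ne, Complex.exp_eq_one_iff]
    rintro ⟨n, hn⟩
    have him := congrArg Complex.im hn
    simp [Complex.mul_im] at him
    have hπ := Real.pi_ne_zero
    have hm : m = -n * r := by
      field_simp at him
      have h2 : (2 * Real.pi) * ((m : ℝ) + (n : ℝ) * r) = 0 := by linear_combination (-2 * Real.pi) * him
      rcases mul_eq_zero.mp h2 with h | h
      · exact absurd h (by positivity)
      · have : (m : ℝ) = ((-n * r : ℤ) : ℝ) := by push_cast; linarith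
        exact_mod_cast this
    have hdvd : (r : ℤ) ∣ m := ⟨-n, by linarith [hm]⟩
    have : r ∣ m.natAbs := Int.ofNat_dvd_right.mp (Int.dvd_natAbs.mpr hdvd)
    have := Nat.le_of_dvd (Int.natAbs_pos.mpr hm0) this
    omega
  calc ∑ d : Fin r, Complex.exp (-Complex.I *
        ((2 * Real.pi / (r : ℝ) * ((m * ((d : ℕ) : ℤ) : ℤ) : ℝ) : ℝ) : ℂ))
      = ∑ d : Fin r, ζ ^ (d : ℕ) := Finset.sum_congr rfl fun d _ => hterm d
    _ = ∑ i ∈ Finset.range r, ζ ^ i := Fin.sum_univ_eq_sum_range _ _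
    _ = (ζ ^ r - 1) / (ζ - 1) := geom_sum_eq hζ1 r
    _ = 0 := by rw [hζr]; simp

/-- Expectation of the coefficients `G_α(k')` (equation (83)): `E[G_α(k')] = χ(q_γ)` if
`α = γ`, and `E[G_α(k')] = 0` otherwise. -/
theorem stmt_17
    {Ω : Type*} [MeasureSpace Ω] [IsProbabilityMeasure (ℙ : Measure Ω)]
    (r N nd : ℕ) (hr : 2 ≤ r) (hN : 1 ≤ N) (hnd : 1 ≤ nd)
    (ε εr : ℝ) (hε : 0 < ε) (hεr : εr = ε * r)
    (b : Fin r × Fin r → Fin nd → Ω → ℝ × ℝ)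
    (hbmeas : ∀ d j, Measurable (b d j))
    (hbdd : ∀ d j ω, |(b d j ω).1| ≤ εr ∧ |(b d j ω).2| ≤ εr)
    (hindep : iIndepFun
      (fun p : (Fin r × Fin r) × Fin nd => b p.1 p.2) ℙ)
    (hiid : ∀ d j d' j', IdentDistrib (b d j) (b d' j') ℙ ℙ)
    (k' k γ : ℤ × ℤ)
    (hk'γ : k' = (k.1 + γ.1 * N, k.2 + γ.2 * N))
    (hk'HR : -(r * N : ℤ) ≤ 2 * k'.1 ∧ 2 * k'.1 < r * N ∧
             -(r * N : ℤ) ≤ 2 * k'.2 ∧ 2 * k'.2 < r * N)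
    (hkLR : -(N : ℤ) ≤ 2 * k.1 ∧ 2 * k.1 < N ∧ -(N : ℤ) ≤ 2 * k.2 ∧ 2 * k.2 < N)
    (qf : ℤ × ℤ → ℝ × ℝ)
    (hqf : ∀ α : ℤ × ℤ, qf α = (2 * Real.pi * ((k.1 + α.1 * N : ℤ) : ℝ) / ((r : ℝ) * N),
                                2 * Real.pi * ((k.2 + α.2 * N : ℤ) : ℝ) / ((r : ℝ) * N)))
    (χ : ℝ × ℝ → ℂ)
    (hχ : ∀ (q : ℝ × ℝ) (d : Fin r × Fin r) (j : Fin nd),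
      χ q = ∫ ω, Complex.exp (Complex.I * ((q.1 * (b d j ω).1 + q.2 * (b d j ω).2 : ℝ) : ℂ)))
    (α : ℤ × ℤ)
    (hαHR : -(r * N : ℤ) ≤ 2 * (k.1 + α.1 * N) ∧ 2 * (k.1 + α.1 * N) < r * N ∧
             -(r * N : ℤ) ≤ 2 * (k.2 + α.2 * N) ∧ 2 * (k.2 + α.2 * N) < r * N)
    :
    (∫ ω, srG r nd b (α - γ) (qf α) ω) = if α = γ then χ (qf γ) else 0 := by

  set q := qf α with hq
  -- integrability
  have hint : ∀ (d : Fin r × Fin r) (j : Fin nd),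
      Integrable (fun ω => Complex.exp (Complex.I *
        ((q.1 * (b d j ω).1 + q.2 * (b d j ω).2 : ℝ) : ℂ))) ℙ := by
    intro d j
    have hm : Measurable (fun ω => Complex.exp (Complex.I *
        ((q.1 * (b d j ω).1 + q.2 * (b d j ω).2 : ℝ) : ℂ))) := by
      apply Measurable.cexp
      apply Measurable.const_mul
      exact Complex.measurable_ofReal.comp
        ((measurable_const.mul (hbmeas d j).fst).add (measurable_const.mul (hbmeas d j).snd))
    refine ⟨hm.aestronglyMeasurable, ?_⟩
    apply MeasureTheory.HasFiniteIntegral.of_bounded (C := 1)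
    filter_upwards with ω
    rw [Complex.norm_exp]
    simp [Complex.mul_re]
  -- notation for phase factor
  set E : Fin r × Fin r → ℂ := fun d => Complex.exp (-Complex.I *
        ((2 * Real.pi / (r : ℝ) *
          (((α - γ).1 * ((d.1 : ℕ) : ℤ) + (α - γ).2 * ((d.2 : ℕ) : ℤ) : ℤ) : ℝ) : ℝ) : ℂ)) with hE
  have hEG : (∫ ω, srG r nd b (α - γ) q ω) =
      ((r : ℂ) ^ 2 * (nd : ℂ))⁻¹ * ((∑ d : Fin r × Fin r, E d) * ((nd : ℂ) * χ q)) := by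
    unfold srG
    rw [MeasureTheory.integral_const_mul]
    congr 1
    rw [MeasureTheory.integral_finset_sum _ (fun d _ =>
      MeasureTheory.integrable_finset_sum _ (fun j _ => (hint d j).const_mul _))]
    rw [Finset.sum_mul]
    refine Finset.sum_congr rfl fun d _ => ?_
    rw [MeasureTheory.integral_finset_sum _ (fun j _ => (hint d j).const_mul _)]
    have : ∀ j : Fin nd, (∫ ω, E d * Complex.exp (Complex.I *
        ((q.1 * (b d j ω).1 + q.2 * (b d j ω).2 : ℝ) : ℂ))) = E d * χ q := by
      intro j
      rw [MeasureTheory.integral_const_mul, ← hχ q d j]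
    calc (∑ j : Fin nd, ∫ ω, E d * Complex.exp (Complex.I *
          ((q.1 * (b d j ω).1 + q.2 * (b d j ω).2 : ℝ) : ℂ)))
        = ∑ _j : Fin nd, E d * χ q := Finset.sum_congr rfl fun j _ => this j
      _ = (nd : ℂ) * (E d * χ q) := by rw [Finset.sum_const, Finset.card_univ,
            Fintype.card_fin, nsmul_eq_mul]
      _ = E d * ((nd : ℂ) * χ q) := by ring
  rw [hEG]
  have hrC : (r : ℂ) ≠ 0 := Nat.cast_ne_zero.mpr (by omega)
  have hndC : (nd : ℂ) ≠ 0 := Nat.cast_ne_zero.mpr (by omega)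
  by_cases hαγ : α = γ
  · rw [if_pos hαγ]
    have hE1 : ∀ d : Fin r × Fin r, E d = 1 := by
      intro d
      rw [hE]
      subst hαγ
      norm_num
    have : (∑ d : Fin r × Fin r, E d) = ((r : ℂ) ^ 2) := by
      simp [hE1, Finset.card_univ]
      ring
    rw [this, hq, hαγ]
    field_simp
  · rw [if_neg hαγ]
    -- bounds on δ
    have hNpos : (0 : ℤ) < N := by exact_mod_cast hN
    have hδ1 : (α.1 - γ.1).natAbs < r := by
      have h1 := hαHR.1; have h2 := hαHR.2.1
      have h3 : -(r * N : ℤ) ≤ 2 * (k.1 + γ.1 * N) := by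
        have := hk'HR.1; rw [hk'γ] at this; simpa using this
      have h4 : 2 * (k.1 + γ.1 * N) < r * N := by
        have := hk'HR.2.1; rw [hk'γ] at this; simpa using this
      have hlt : α.1 - γ.1 < r := by nlinarith
      have hgt : -(r : ℤ) < α.1 - γ.1 := by nlinarith
      omega
    have hδ2 : (α.2 - γ.2).natAbs < r := by
      have h1 := hαHR.2.2.1; have h2 := hαHR.2.2.2
      have h3 : -(r * N : ℤ) ≤ 2 * (k.2 + γ.2 * N) := by
        have := hk'HR.2.2.1; rw [hk'γ] at this; simpa using this
      have h4 : 2 * (k.2 + γ.2 * N) < r * N := by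
        have := hk'HR.2.2.2; rw [hk'γ] at this; simpa using this
      have hlt : α.2 - γ.2 < r := by nlinarith
      have hgt : -(r : ℤ) < α.2 - γ.2 := by nlinarith
      omega
    -- factor the sum
    have hfac : (∑ d : Fin r × Fin r, E d) =
        (∑ d1 : Fin r, Complex.exp (-Complex.I *
          ((2 * Real.pi / (r : ℝ) * (((α - γ).1 * ((d1 : ℕ) : ℤ) : ℤ) : ℝ) : ℝ) : ℂ))) *
        (∑ d2 : Fin r, Complex.exp (-Complex.I *
          ((2 * Real.pi / (r : ℝ) * (((α - γ).2 * ((d2 : ℕ) : ℤ) : ℤ) : ℝ) : ℝ) : ℂ))) := by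
      rw [hE, Fintype.sum_prod_type, Finset.sum_mul]
      refine Finset.sum_congr rfl fun d1 _ => ?_
      rw [Finset.mul_sum]
      refine Finset.sum_congr rfl fun d2 _ => ?_
      rw [← Complex.exp_add]
      congr 1
      push_cast
      ring
    simp only [Prod.fst_sub, Prod.snd_sub] at hfac
    have hzero : (∑ d : Fin r × Fin r, E d) = 0 := by
      rw [hfac]
      rcases (by
        by_contra h
        push_neg at h
        exact hαγ (Prod.ext (by omega : α.1 = γ.1) (by omega : α.2 = γ.2)) :
          α.1 - γ.1 ≠ 0 ∨ α.2 - γ.2 ≠ 0) with h | h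
      · rw [aux_geom r hr _ h hδ1, zero_mul]
      · rw [aux_geom r hr _ h hδ2, mul_zero]
    rw [hzero, zero_mul, mul_zero]
end

section
/- With the setup below, assume the b_{dj} are independent and identically distributed, with common characteristic value χ(q) = E[exp(i q·b_{dj})] for q ∈ ℝ². Let α₁, α₂ ∈ ℤ² with k + α₁N ∈ D_HR, k + α₂N ∈ D_HR, α₁ ≠ γ and α₂ ≠ γ. Then E[ G_{α₁}(k') · conj(G_{α₂}(k')) ] = (1/(r² n_d)) ( 1 − |χ(q_{α₁})|² ) if α₁ = α₂, and E[ G_{α₁}(k') · conj(G_{α₂}(k')) ] = 0 if α₁ ≠ α₂; in particular, the aliasing coefficients (G_α(k'))_{α≠γ} are pairwise uncorrelated. -/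
open MeasureTheory ProbabilityTheory

lemma myIntMul {Ω : Type*} [MeasurableSpace Ω] {μ : Measure Ω}
    {X Y : Ω → ℂ} (h : IndepFun X Y μ) (hX : Integrable X μ) (hY : Integrable Y μ) :
    ∫ ω, X ω * Y ω ∂μ = (∫ ω, X ω ∂μ) * ∫ ω, Y ω ∂μ := by
  have hrr : IndepFun (fun ω => (X ω).re) (fun ω => (Y ω).re) μ :=
    h.comp Complex.measurable_re Complex.measurable_re
  have hri : IndepFun (fun ω => (X ω).re) (fun ω => (Y ω).im) μ :=
    h.comp Complex.measurable_re Complex.measurable_im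
  have hir : IndepFun (fun ω => (X ω).im) (fun ω => (Y ω).re) μ :=
    h.comp Complex.measurable_im Complex.measurable_re
  have hii : IndepFun (fun ω => (X ω).im) (fun ω => (Y ω).im) μ :=
    h.comp Complex.measurable_im Complex.measurable_im
  have iXr : Integrable (fun ω => (X ω).re) μ := hX.re
  have iXi : Integrable (fun ω => (X ω).im) μ := hX.im
  have iYr : Integrable (fun ω => (Y ω).re) μ := hY.re
  have iYi : Integrable (fun ω => (Y ω).im) μ := hY.im
  have irr : Integrable (fun ω => (X ω).re * (Y ω).re) μ := hrr.integrable_mul iXr iYr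
  have iri : Integrable (fun ω => (X ω).re * (Y ω).im) μ := hri.integrable_mul iXr iYi
  have iir : Integrable (fun ω => (X ω).im * (Y ω).re) μ := hir.integrable_mul iXi iYr
  have iii : Integrable (fun ω => (X ω).im * (Y ω).im) μ := hii.integrable_mul iXi iYi
  have hm : Integrable (fun ω => X ω * Y ω) μ := h.integrable_mul hX hY
  rw [← integral_re_add_im hm, ← integral_re_add_im hX, ← integral_re_add_im hY]
  simp only [RCLike.re_to_complex, RCLike.im_to_complex, RCLike.I_to_complex,
    Complex.mul_re, Complex.mul_im]
  have err : ∫ a, (X a).re * (Y a).re ∂μ = (∫ a, (X a).re ∂μ) * ∫ a, (Y a).re ∂μ :=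
    ProbabilityTheory.IndepFun.integral_fun_mul_eq_mul_integral hrr iXr.1 iYr.1
  have eri : ∫ a, (X a).re * (Y a).im ∂μ = (∫ a, (X a).re ∂μ) * ∫ a, (Y a).im ∂μ :=
    ProbabilityTheory.IndepFun.integral_fun_mul_eq_mul_integral hri iXr.1 iYi.1
  have eir : ∫ a, (X a).im * (Y a).re ∂μ = (∫ a, (X a).im ∂μ) * ∫ a, (Y a).re ∂μ :=
    ProbabilityTheory.IndepFun.integral_fun_mul_eq_mul_integral hir iXi.1 iYr.1
  have eii : ∫ a, (X a).im * (Y a).im ∂μ = (∫ a, (X a).im ∂μ) * ∫ a, (Y a).im ∂μ :=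
    ProbabilityTheory.IndepFun.integral_fun_mul_eq_mul_integral hii iXi.1 iYi.1
  rw [integral_sub irr iii, integral_add iri iir, err, eri, eir, eii]
  push_cast
  ring_nf
  rw [Complex.I_sq]
  ring

lemma myGeom (r : ℕ) (hr : 0 < r) (m : ℤ) (hm : ¬ ((r:ℤ) ∣ m)) :
    ∑ d : Fin r, Complex.exp (-(2 * Real.pi * Complex.I * m * ((d : ℕ) : ℂ)) / r) = 0 := by
  set x : ℂ := Complex.exp (-(2 * Real.pi * Complex.I * m) / r) with hx
  have hr0 : (r : ℂ) ≠ 0 := Nat.cast_ne_zero.mpr hr.ne'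
  have hterm : ∀ d : Fin r,
      Complex.exp (-(2 * Real.pi * Complex.I * m * ((d : ℕ) : ℂ)) / r) = x ^ (d : ℕ) := by
    intro d
    rw [hx, ← Complex.exp_nat_mul]
    congr 1
    ring
  have hxr : x ^ r = 1 := by
    rw [hx, ← Complex.exp_nat_mul]
    have h : (r : ℂ) * (-(2 * Real.pi * Complex.I * m) / r)
        = ((-m : ℤ) : ℂ) * (2 * Real.pi * Complex.I) := by
      rw [mul_div_assoc', mul_div_cancel_left₀ _ hr0]
      push_cast
      ring
    rw [h]
    exact Complex.exp_int_mul_two_pi_mul_I _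
  have h2 : (2 * (Real.pi:ℂ) * Complex.I) ≠ 0 := by
    simp [Real.pi_ne_zero, Complex.I_ne_zero, Complex.ofReal_ne_zero]
  have hx1 : x ≠ 1 := by
    intro hx1
    rw [hx, Complex.exp_eq_one_iff] at hx1
    obtain ⟨n, hn⟩ := hx1
    apply hm
    refine ⟨-n, ?_⟩
    have key : ((m : ℤ) : ℂ) = ((r * (-n) : ℤ) : ℂ) := by
      field_simp at hn
      push_cast
      apply mul_left_cancel₀ h2
      linear_combination -(2 * (Real.pi:ℂ) * Complex.I) * hn
    exact_mod_cast key
  simp_rw [hterm]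
  rw [Fin.sum_univ_eq_sum_range (fun i => x ^ i) r, geom_sum_eq hx1, hxr]
  simp

/-- Correlations of the aliasing coefficients (equation (89)): for `α₁, α₂ ≠ γ`,
`E[G_{α₁}(k') conj(G_{α₂}(k'))] = (1/(r² n_d)) (1 − |χ(q_{α₁})|²)` if `α₁ = α₂` and `0`
otherwise; in particular the aliasing coefficients are pairwise uncorrelated. -/
theorem stmt_18
    {Ω : Type*} [MeasureSpace Ω] [IsProbabilityMeasure (ℙ : Measure Ω)]
    (r N nd : ℕ) (hr : 2 ≤ r) (hN : 1 ≤ N) (hnd : 1 ≤ nd)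
    (ε εr : ℝ) (hε : 0 < ε) (hεr : εr = ε * r)
    (b : Fin r × Fin r → Fin nd → Ω → ℝ × ℝ)
    (hbmeas : ∀ d j, Measurable (b d j))
    (hbdd : ∀ d j ω, |(b d j ω).1| ≤ εr ∧ |(b d j ω).2| ≤ εr)
    (hindep : iIndepFun
      (fun p : (Fin r × Fin r) × Fin nd => b p.1 p.2) ℙ)
    (hiid : ∀ d j d' j', IdentDistrib (b d j) (b d' j') ℙ ℙ)
    (k' k γ : ℤ × ℤ)
    (hk'γ : k' = (k.1 + γ.1 * N, k.2 + γ.2 * N))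
    (hk'HR : -(r * N : ℤ) ≤ 2 * k'.1 ∧ 2 * k'.1 < r * N ∧
             -(r * N : ℤ) ≤ 2 * k'.2 ∧ 2 * k'.2 < r * N)
    (hkLR : -(N : ℤ) ≤ 2 * k.1 ∧ 2 * k.1 < N ∧ -(N : ℤ) ≤ 2 * k.2 ∧ 2 * k.2 < N)
    (qf : ℤ × ℤ → ℝ × ℝ)
    (hqf : ∀ α : ℤ × ℤ, qf α = (2 * Real.pi * ((k.1 + α.1 * N : ℤ) : ℝ) / ((r : ℝ) * N),
                                2 * Real.pi * ((k.2 + α.2 * N : ℤ) : ℝ) / ((r : ℝ) * N)))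
    (χ : ℝ × ℝ → ℂ)
    (hχ : ∀ (q : ℝ × ℝ) (d : Fin r × Fin r) (j : Fin nd),
      χ q = ∫ ω, Complex.exp (Complex.I * ((q.1 * (b d j ω).1 + q.2 * (b d j ω).2 : ℝ) : ℂ)))
    (α₁ α₂ : ℤ × ℤ)
    (hα₁HR : -(r * N : ℤ) ≤ 2 * (k.1 + α₁.1 * N) ∧ 2 * (k.1 + α₁.1 * N) < r * N ∧
             -(r * N : ℤ) ≤ 2 * (k.2 + α₁.2 * N) ∧ 2 * (k.2 + α₁.2 * N) < r * N)
    (hα₂HR : -(r * N : ℤ) ≤ 2 * (k.1 + α₂.1 * N) ∧ 2 * (k.1 + α₂.1 * N) < r * N ∧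
             -(r * N : ℤ) ≤ 2 * (k.2 + α₂.2 * N) ∧ 2 * (k.2 + α₂.2 * N) < r * N)
    (hα₁γ : α₁ ≠ γ) (hα₂γ : α₂ ≠ γ) :
    (∫ ω, srG r nd b (α₁ - γ) (qf α₁) ω * (starRingEnd ℂ) (srG r nd b (α₂ - γ) (qf α₂) ω))
      = if α₁ = α₂ then
          ((r : ℂ) ^ 2 * (nd : ℂ))⁻¹ * (1 - ((‖χ (qf α₁)‖ : ℝ) : ℂ) ^ 2)
        else 0 := by
  classical
  have hr0 : 0 < r := by omega
  have hrC : ((r : ℂ) ^ 2 * (nd : ℂ)) ≠ 0 := by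
    exact mul_ne_zero (pow_ne_zero 2 (Nat.cast_ne_zero.mpr hr0.ne'))
      (Nat.cast_ne_zero.mpr (by omega : nd ≠ 0))
  set q₁ : ℝ × ℝ := qf α₁ with hq₁
  set q₂ : ℝ × ℝ := qf α₂ with hq₂
  set c : ℂ := ((r : ℂ) ^ 2 * (nd : ℂ))⁻¹ with hc
  -- phase and random factors
  set e : (ℤ × ℤ) → (Fin r × Fin r) → ℂ := fun δ d => Complex.exp (-Complex.I *
        ((2 * Real.pi / (r : ℝ) *
          ((δ.1 * ((d.1 : ℕ) : ℤ) + δ.2 * ((d.2 : ℕ) : ℤ) : ℤ) : ℝ) : ℝ) : ℂ)) with he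
  set X : (ℝ × ℝ) → ((Fin r × Fin r) × Fin nd) → Ω → ℂ := fun q p ω =>
    Complex.exp (Complex.I * ((q.1 * (b p.1 p.2 ω).1 + q.2 * (b p.1 p.2 ω).2 : ℝ) : ℂ)) with hX
  set w : ℤ → ℕ → ℂ := fun m d => Complex.exp (-(2 * Real.pi * Complex.I * m * d) / r) with hw
  -- rewrite srG
  have hGrw : ∀ (δ : ℤ × ℤ) (q : ℝ × ℝ) (ω : Ω),
      srG r nd b δ q ω = c * ∑ p : (Fin r × Fin r) × Fin nd, e δ p.1 * X q p ω := by
    intro δ q ω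
    rw [srG]
    congr 1
    exact (Fintype.sum_prod_type fun p => e δ p.1 * X q p ω).symm

  -- measurability of the basic map
  have hstarm : Measurable (fun z : ℂ => (starRingEnd ℂ) z) := continuous_star.measurable
  have hφm : ∀ q : ℝ × ℝ, Measurable (fun x : ℝ × ℝ =>
      Complex.exp (Complex.I * ((q.1 * x.1 + q.2 * x.2 : ℝ) : ℂ))) := by
    intro q
    exact Complex.measurable_exp.comp
      ((Complex.measurable_ofReal.comp
        ((measurable_fst.const_mul q.1).add (measurable_snd.const_mul q.2))).const_mul _)
  have hXm : ∀ (q : ℝ × ℝ) p, Measurable (X q p) := fun q p => (hφm q).comp (hbmeas p.1 p.2)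
  have hnorm : ∀ (q : ℝ × ℝ) p ω, ‖X q p ω‖ = 1 := by
    intro q p ω
    simp [hX, Complex.norm_exp]
  have hXI : ∀ (q : ℝ × ℝ) p, Integrable (X q p) ℙ := by
    intro q p
    refine (integrable_const (1:ℝ)).mono' (hXm q p).aestronglyMeasurable ?_
    filter_upwards with ω
    rw [hnorm]
  have hXcI : ∀ (q : ℝ × ℝ) p, Integrable (fun ω => (starRingEnd ℂ) (X q p ω)) ℙ := by
    intro q p
    refine (integrable_const (1:ℝ)).mono' (hstarm.comp (hXm q p)).aestronglyMeasurable ?_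
    filter_upwards with ω
    rw [RCLike.norm_conj, hnorm]
  have hXXI : ∀ p p', Integrable (fun ω => X q₁ p ω * (starRingEnd ℂ) (X q₂ p' ω)) ℙ := by
    intro p p'
    refine (integrable_const (1:ℝ)).mono'
      (((hXm q₁ p).mul (hstarm.comp (hXm q₂ p'))).aestronglyMeasurable) ?_
    filter_upwards with ω
    rw [norm_mul, RCLike.norm_conj, hnorm, hnorm]
    norm_num
  -- key integral evaluation
  have hkey : ∀ p p' : (Fin r × Fin r) × Fin nd,
      (∫ ω, X q₁ p ω * (starRingEnd ℂ) (X q₂ p' ω)) =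
        if p = p' then χ (q₁ - q₂) else χ q₁ * (starRingEnd ℂ) (χ q₂) := by
    intro p p'
    by_cases hpp : p = p'
    · subst hpp
      rw [if_pos rfl]
      have hpt : ∀ ω, X q₁ p ω * (starRingEnd ℂ) (X q₂ p ω)
          = Complex.exp (Complex.I * (((q₁ - q₂).1 * (b p.1 p.2 ω).1
              + (q₁ - q₂).2 * (b p.1 p.2 ω).2 : ℝ) : ℂ)) := by
        intro ω
        simp only [hX]
        rw [← Complex.exp_conj, ← Complex.exp_add]
        congr 1
        simp only [map_mul, Complex.conj_I, Complex.conj_ofReal, Prod.fst_sub, Prod.snd_sub]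
        push_cast
        ring
      simp_rw [hpt]
      exact (hχ (q₁ - q₂) p.1 p.2).symm
    · rw [if_neg hpp]
      have hind : IndepFun (b p.1 p.2) (b p'.1 p'.2) ℙ := hindep.indepFun hpp
      have hind2 : IndepFun (X q₁ p) (fun ω => (starRingEnd ℂ) (X q₂ p' ω)) ℙ :=
        hind.comp (hφm q₁) (hstarm.comp (hφm q₂))
      rw [myIntMul hind2 (hXI q₁ p) (hXcI q₂ p')]
      have e1 : (∫ ω, X q₁ p ω) = χ q₁ := (hχ q₁ p.1 p.2).symm
      have e2 : (∫ ω, (starRingEnd ℂ) (X q₂ p' ω)) = (starRingEnd ℂ) (χ q₂) := by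
        rw [integral_conj]
        congr 1
        exact (hχ q₂ p'.1 p'.2).symm
      rw [e1, e2]
  -- expand the integral
  have hsum : (∫ ω, srG r nd b (α₁ - γ) q₁ ω * (starRingEnd ℂ) (srG r nd b (α₂ - γ) q₂ ω))
      = c * c * ∑ p : (Fin r × Fin r) × Fin nd, ∑ p' : (Fin r × Fin r) × Fin nd,
          (e (α₁ - γ) p.1 * (starRingEnd ℂ) (e (α₂ - γ) p'.1)) *
            (if p = p' then χ (q₁ - q₂) else χ q₁ * (starRingEnd ℂ) (χ q₂)) := by
    have hcconj : (starRingEnd ℂ) c = c := by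
      simp [hc]
    have hpt : ∀ ω, srG r nd b (α₁ - γ) q₁ ω * (starRingEnd ℂ) (srG r nd b (α₂ - γ) q₂ ω)
        = ∑ p : (Fin r × Fin r) × Fin nd, ∑ p' : (Fin r × Fin r) × Fin nd,
            (c * c) * ((e (α₁ - γ) p.1 * (starRingEnd ℂ) (e (α₂ - γ) p'.1)) *
              (X q₁ p ω * (starRingEnd ℂ) (X q₂ p' ω))) := by
      intro ω
      rw [hGrw, hGrw, map_mul, hcconj, map_sum]
      rw [show (c * ∑ p : (Fin r × Fin r) × Fin nd, e (α₁ - γ) p.1 * X q₁ p ω) *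
            (c * ∑ p' : (Fin r × Fin r) × Fin nd,
              (starRingEnd ℂ) (e (α₂ - γ) p'.1 * X q₂ p' ω))
          = (c * c) * ((∑ p : (Fin r × Fin r) × Fin nd, e (α₁ - γ) p.1 * X q₁ p ω) *
              ∑ p' : (Fin r × Fin r) × Fin nd,
                (starRingEnd ℂ) (e (α₂ - γ) p'.1 * X q₂ p' ω)) from by ring]
      rw [Finset.sum_mul_sum, Finset.mul_sum]
      refine Finset.sum_congr rfl fun p _ => ?_
      rw [Finset.mul_sum]
      refine Finset.sum_congr rfl fun p' _ => ?_
      rw [map_mul]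
      ring
    simp_rw [hpt]
    rw [integral_finset_sum]
    swap
    · intro p _
      exact integrable_finset_sum _ fun p' _ => ((hXXI p p').const_mul _).const_mul _
    have hstep : ∀ p : (Fin r × Fin r) × Fin nd,
        (∫ ω, ∑ p' : (Fin r × Fin r) × Fin nd,
            (c * c) * ((e (α₁ - γ) p.1 * (starRingEnd ℂ) (e (α₂ - γ) p'.1)) *
              (X q₁ p ω * (starRingEnd ℂ) (X q₂ p' ω))))
          = ∑ p' : (Fin r × Fin r) × Fin nd,
              (c * c) * ((e (α₁ - γ) p.1 * (starRingEnd ℂ) (e (α₂ - γ) p'.1)) *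
                (if p = p' then χ (q₁ - q₂) else χ q₁ * (starRingEnd ℂ) (χ q₂))) := by
      intro p
      rw [integral_finset_sum]
      swap
      · intro p' _
        exact ((hXXI p p').const_mul _).const_mul _
      refine Finset.sum_congr rfl fun p' _ => ?_
      rw [integral_const_mul, integral_const_mul, hkey p p']
    simp_rw [hstep]
    simp only [Finset.mul_sum]
  -- structure of the phase factors
  have hefact : ∀ (δ : ℤ × ℤ) (d : Fin r × Fin r), e δ d = w δ.1 (d.1 : ℕ) * w δ.2 (d.2 : ℕ) := by
    intro δ d
    simp only [he, hw]
    rw [← Complex.exp_add]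
    congr 1
    push_cast
    ring
  have hconjmul : ∀ (δ δ' : ℤ × ℤ) (d : Fin r × Fin r),
      e δ d * (starRingEnd ℂ) (e δ' d) = e (δ - δ') d := by
    intro δ δ' d
    simp only [he]
    rw [← Complex.exp_conj, ← Complex.exp_add]
    congr 1
    simp only [map_mul, map_neg, Complex.conj_I, Complex.conj_ofReal, Prod.fst_sub, Prod.snd_sub]
    push_cast
    ring
  have hWzero : ∀ m : ℤ, ¬((r:ℤ) ∣ m) → (∑ d : Fin r, w m (d : ℕ)) = 0 := by
    intro m hm
    simp only [hw]
    exact myGeom r hr0 m hm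
  have hPsum : ∀ δ : ℤ × ℤ, (∑ d : Fin r × Fin r, e δ d)
      = (∑ d1 : Fin r, w δ.1 (d1 : ℕ)) * (∑ d2 : Fin r, w δ.2 (d2 : ℕ)) := by
    intro δ
    rw [Finset.sum_mul_sum, Fintype.sum_prod_type]
    exact Finset.sum_congr rfl fun d1 _ => Finset.sum_congr rfl fun d2 _ => hefact δ (d1, d2)
  have hPzero : ∀ δ : ℤ × ℤ, (¬((r:ℤ) ∣ δ.1) ∨ ¬((r:ℤ) ∣ δ.2)) →
      (∑ d : Fin r × Fin r, e δ d) = 0 := by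
    intro δ hδ
    rw [hPsum]
    rcases hδ with h | h
    · rw [hWzero _ h, zero_mul]
    · rw [hWzero _ h, mul_zero]
  have hPsumP : ∀ δ : ℤ × ℤ, (∑ p : (Fin r × Fin r) × Fin nd, e δ p.1)
      = (nd : ℂ) * ∑ d : Fin r × Fin r, e δ d := by
    intro δ
    rw [Fintype.sum_prod_type]
    simp [Finset.sum_const, Finset.mul_sum, mul_comm]
  -- arithmetic of the frequency bands
  have hNpos : (0:ℤ) < (N:ℤ) := by exact_mod_cast hN
  have hband : ∀ a a' k0 : ℤ, (-(r * N : ℤ) ≤ 2*(k0 + a*N)) → (2*(k0 + a*N) < r*N) →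
      (-(r * N : ℤ) ≤ 2*(k0 + a'*N)) → (2*(k0 + a'*N) < r*N) → a ≠ a' →
      ¬ ((r:ℤ) ∣ (a - a')) := by
    intro a a' k0 h1 h2 h3 h4 hne hdvd
    have e1 : 2*((a - a')*(N:ℤ)) = 2*(k0 + a*N) - 2*(k0 + a'*N) := by ring
    have l1 : (a - a')*(N:ℤ) < r*N := by linarith
    have l2 : -((r:ℤ)*N) < (a - a')*(N:ℤ)  := by linarith
    have labs : |a - a'| < (r:ℤ) := by
      have habs : |(a - a')*(N:ℤ)| < (r:ℤ)*N := abs_lt.mpr ⟨l2, l1⟩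
      rw [abs_mul, abs_of_nonneg hNpos.le] at habs
      exact lt_of_mul_lt_mul_right habs hNpos.le
    have h0 : a - a' ≠ 0 := sub_ne_zero.mpr hne
    have := Int.le_of_dvd (abs_pos.mpr h0) ((dvd_abs _ _).mpr hdvd)
    omega
  have hγHR : -(r * N : ℤ) ≤ 2 * (k.1 + γ.1 * N) ∧ 2 * (k.1 + γ.1 * N) < r * N ∧
      -(r * N : ℤ) ≤ 2 * (k.2 + γ.2 * N) ∧ 2 * (k.2 + γ.2 * N) < r * N := by
    rw [hk'γ] at hk'HR
    simpa using hk'HR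
  have hδ₁div : ¬((r:ℤ) ∣ (α₁ - γ).1) ∨ ¬((r:ℤ) ∣ (α₁ - γ).2) := by
    have hcases : α₁.1 ≠ γ.1 ∨ α₁.2 ≠ γ.2 := by
      by_contra h
      push_neg at h
      exact hα₁γ (Prod.ext h.1 h.2)
    rcases hcases with h | h
    · exact Or.inl (hband α₁.1 γ.1 k.1 hα₁HR.1 hα₁HR.2.1 hγHR.1 hγHR.2.1 h)
    · exact Or.inr (hband α₁.2 γ.2 k.2 hα₁HR.2.2.1 hα₁HR.2.2.2 hγHR.2.2.1 hγHR.2.2.2 h)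
  have hS1 : (∑ p : (Fin r × Fin r) × Fin nd, e (α₁ - γ) p.1) = 0 := by
    rw [hPsumP, hPzero _ hδ₁div, mul_zero]
  -- split the double sum
  set u : ℂ := χ (q₁ - q₂) with hu
  set v : ℂ := χ q₁ * (starRingEnd ℂ) (χ q₂) with hv
  have hsplit : ∑ p : (Fin r × Fin r) × Fin nd, ∑ p' : (Fin r × Fin r) × Fin nd,
        (e (α₁ - γ) p.1 * (starRingEnd ℂ) (e (α₂ - γ) p'.1)) * (if p = p' then u else v)
      = (∑ p : (Fin r × Fin r) × Fin nd, e (α₁ - γ) p.1) *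
          (∑ p' : (Fin r × Fin r) × Fin nd, (starRingEnd ℂ) (e (α₂ - γ) p'.1)) * v
        + (∑ p : (Fin r × Fin r) × Fin nd,
            e (α₁ - γ) p.1 * (starRingEnd ℂ) (e (α₂ - γ) p.1)) * (u - v) := by
    have hterm : ∀ p p' : (Fin r × Fin r) × Fin nd,
        (e (α₁ - γ) p.1 * (starRingEnd ℂ) (e (α₂ - γ) p'.1)) * (if p = p' then u else v)
          = e (α₁ - γ) p.1 * (starRingEnd ℂ) (e (α₂ - γ) p'.1) * v
            + (if p = p' then e (α₁ - γ) p.1 * (starRingEnd ℂ) (e (α₂ - γ) p'.1) * (u - v)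
               else 0) := by
      intro p p'
      by_cases h : p = p'
      · simp only [if_pos h]
        ring
      · simp only [if_neg h]
        ring
    simp_rw [hterm, Finset.sum_add_distrib, Finset.sum_ite_eq, Finset.mem_univ, if_true]
    congr 1
    · rw [Finset.sum_mul_sum]
      simp only [Finset.sum_mul]
    · rw [Finset.sum_mul]
  rw [hsum, hsplit, hS1]
  by_cases hA : α₁ = α₂
  · rw [if_pos hA]
    have hq12 : q₂ = q₁ := by rw [hq₁, hq₂, hA]
    have hu1 : u = 1 := by
      have d0 : Fin r := ⟨0, hr0⟩
      have j0 : Fin nd := ⟨0, by omega⟩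
      rw [hu, hq12, sub_self, hχ (0 : ℝ × ℝ) (d0, d0) j0]
      simp
    have hD : (∑ p : (Fin r × Fin r) × Fin nd,
        e (α₁ - γ) p.1 * (starRingEnd ℂ) (e (α₂ - γ) p.1)) = (r:ℂ)^2 * (nd:ℂ) := by
      have h1 : ∀ p : (Fin r × Fin r) × Fin nd,
          e (α₁ - γ) p.1 * (starRingEnd ℂ) (e (α₂ - γ) p.1) = 1 := by
        intro p
        rw [hconjmul, hA, sub_self]
        simp [he]
      simp_rw [h1]
      simp only [Finset.sum_const, Finset.card_univ, Fintype.card_prod, Fintype.card_fin,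
        nsmul_eq_mul]
      push_cast
      ring
    have hvabs : v = ((‖χ q₁‖ : ℝ) : ℂ) ^ 2 := by
      rw [hv, hq12, Complex.mul_conj, Complex.normSq_eq_norm_sq]
      norm_cast
    rw [hu1, hD, hvabs]
    have hcR : c * ((r:ℂ)^2 * (nd:ℂ)) = 1 := by
      rw [hc]
      exact inv_mul_cancel₀ hrC
    rw [hc] at hcR ⊢
    linear_combination (((r : ℂ) ^ 2 * (nd : ℂ))⁻¹ *
      (1 - ((‖χ q₁‖ : ℝ) : ℂ) ^ 2)) * hcR
  · rw [if_neg hA]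
    have hδdiv : ¬((r:ℤ) ∣ ((α₁ - γ) - (α₂ - γ)).1) ∨ ¬((r:ℤ) ∣ ((α₁ - γ) - (α₂ - γ)).2) := by
      have hcases : α₁.1 ≠ α₂.1 ∨ α₁.2 ≠ α₂.2 := by
        by_contra h
        push_neg at h
        exact hA (Prod.ext h.1 h.2)
      have hfst : ((α₁ - γ) - (α₂ - γ)).1 = α₁.1 - α₂.1 := by
        simp [Prod.fst_sub]
      have hsnd : ((α₁ - γ) - (α₂ - γ)).2 = α₁.2 - α₂.2 := by
        simp [Prod.snd_sub]
      rcases hcases with h | h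
      · refine Or.inl ?_
        rw [hfst]
        exact hband α₁.1 α₂.1 k.1 hα₁HR.1 hα₁HR.2.1 hα₂HR.1 hα₂HR.2.1 h
      · refine Or.inr ?_
        rw [hsnd]
        exact hband α₁.2 α₂.2 k.2 hα₁HR.2.2.1 hα₁HR.2.2.2 hα₂HR.2.2.1 hα₂HR.2.2.2 h
    have hD0 : (∑ p : (Fin r × Fin r) × Fin nd,
        e (α₁ - γ) p.1 * (starRingEnd ℂ) (e (α₂ - γ) p.1)) = 0 := by
      have h1 : ∀ p : (Fin r × Fin r) × Fin nd,
          e (α₁ - γ) p.1 * (starRingEnd ℂ) (e (α₂ - γ) p.1) = e ((α₁ - γ) - (α₂ - γ)) p.1 :=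
        fun p => hconjmul _ _ _
      simp_rw [h1]
      rw [hPsumP, hPzero _ hδdiv, mul_zero]
    rw [hD0]
    ring
end
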